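/- arXiv:0809.0533 — 6 statements merged into one kernel-verified Lean document; each statement's English description precedes it below -/
import Mathlib

section
/- Let r_I, R_p > 0 and define I(ρ) = 2π ∫₀^ρ t · S_I(t, R_p, r_I)/(π R_p²) dt. Then for every ρ with |R_p − r_I| < ρ < R_p + r_I, one has I(ρ) = (1/2)π r_I² + ρ²·arccos((R_p² + ρ² − r_I²)/(2 R_p ρ)) + (r_I² ρ²/R_p²)·arccos((r_I² + ρ² − R_p²)/(2 r_I ρ)) − r_I²·arcsin((r_I² + R_p² − ρ²)/(2 r_I R_p)) − ((ρ² + r_I² + R_p²)/(4 R_p²))·√((r_I + R_p + ρ)(r_I + R_p − ρ)(r_I − R_p + ρ)(R_p − r_I + ρ)). -/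
open MeasureTheory Metric Real

/-- `SI d r₁ r₂` is the area (two-dimensional Lebesgue measure) of the intersection of
two closed disks in the plane of radii `r₁` and `r₂` whose centers are at distance `d`. -/
noncomputable def SI (d r₁ r₂ : ℝ) : ℝ :=
  (volume (closedBall (0 : EuclideanSpace ℝ (Fin 2)) r₁ ∩
    closedBall (EuclideanSpace.single (0 : Fin 2) d) r₂)).toReal

open intervalIntegral

namespace SIaux

lemma ball_eq (c r : ℝ) (hr : 0 ≤ r) :
    (closedBall (EuclideanSpace.single (0 : Fin 2) c) r : Set (EuclideanSpace ℝ (Fin 2)))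
    = {x | (x 0 - c)^2 + (x 1)^2 ≤ r^2} := by
  ext x
  simp only [mem_closedBall, EuclideanSpace.dist_eq, Set.mem_setOf_eq, Fin.sum_univ_two,
    EuclideanSpace.single_apply, if_pos rfl, Real.sqrt_le_iff, Real.dist_eq, sq_abs,
    show ((1:Fin 2) = 0) = False by simp, if_false]
  exact ⟨fun ⟨_, h⟩ => by simpa using h, fun h => ⟨hr, by simpa using h⟩⟩

lemma vol_slice (c : ℝ) : volume {y : ℝ | y^2 ≤ c} = ENNReal.ofReal (2 * Real.sqrt c) := by
  rcases le_or_gt 0 c with hc | hc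
  · have : {y : ℝ | y^2 ≤ c} = Set.Icc (-Real.sqrt c) (Real.sqrt c) := by
      ext y
      simp only [Set.mem_setOf_eq, Set.mem_Icc, ← abs_le, ← sq_abs y]
      exact (Real.le_sqrt (abs_nonneg y) hc).symm
    rw [this, Real.volume_Icc]
    congr 1; ring
  · have h1 : {y : ℝ | y^2 ≤ c} = ∅ := by
      ext y; simp only [Set.mem_setOf_eq, Set.mem_empty_iff_false, iff_false, not_le]
      exact lt_of_lt_of_le hc (sq_nonneg y)
    rw [h1, measure_empty, Real.sqrt_eq_zero_of_nonpos hc.le]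
    simp

lemma g_cont (d r₁ r₂ : ℝ) :
    Continuous (fun x : ℝ => 2 * Real.sqrt (min (r₁^2 - x^2) (r₂^2 - (x - d)^2))) := by
  fun_prop

lemma g_supp (d r₁ r₂ : ℝ) (h₁ : 0 ≤ r₁) (x : ℝ) (hx : x ∉ Set.Icc (-r₁) r₁) :
    2 * Real.sqrt (min (r₁^2 - x^2) (r₂^2 - (x - d)^2)) = 0 := by
  have : r₁^2 - x^2 < 0 := by
    simp only [Set.mem_Icc, not_and_or, not_le] at hx
    rcases hx with h | h
    · nlinarith [mul_pos (by linarith : (0:ℝ) < -(x+r₁)) (by linarith : (0:ℝ) < -(x-r₁))]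
    · nlinarith [mul_pos (by linarith : (0:ℝ) < x+r₁) (by linarith : (0:ℝ) < x-r₁)]
  rw [Real.sqrt_eq_zero_of_nonpos (by simp [min_le_iff]; left; linarith), mul_zero]

lemma g_integrable (d r₁ r₂ : ℝ) (h₁ : 0 ≤ r₁) :
    Integrable (fun x : ℝ => 2 * Real.sqrt (min (r₁^2 - x^2) (r₂^2 - (x - d)^2))) := by
  apply Continuous.integrable_of_hasCompactSupport (g_cont d r₁ r₂)
  apply HasCompactSupport.intro isCompact_Icc (g_supp d r₁ r₂ h₁)

lemma SI_eq_integral (d r₁ r₂ : ℝ) (h₁ : 0 ≤ r₁) (h₂ : 0 ≤ r₂) :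
    SI d r₁ r₂ = ∫ x : ℝ, 2 * Real.sqrt (min (r₁^2 - x^2) (r₂^2 - (x - d)^2)) := by
  have hm1 : Measurable fun p : ℝ × ℝ => p.1^2 + p.2^2 := by fun_prop
  have hm2 : Measurable fun p : ℝ × ℝ => (p.1 - d)^2 + p.2^2 := by fun_prop
  have hA : MeasurableSet {p : ℝ × ℝ | p.1^2 + p.2^2 ≤ r₁^2 ∧ (p.1 - d)^2 + p.2^2 ≤ r₂^2} := by
    rw [Set.setOf_and]
    exact (measurableSet_le hm1 measurable_const).inter (measurableSet_le hm2 measurable_const)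
  have key : volume (closedBall (0 : EuclideanSpace ℝ (Fin 2)) r₁ ∩
      closedBall (EuclideanSpace.single (0 : Fin 2) d) r₂)
      = volume {p : ℝ × ℝ | p.1^2 + p.2^2 ≤ r₁^2 ∧ (p.1 - d)^2 + p.2^2 ≤ r₂^2} := by
    have mp : MeasurePreserving
        (fun x : EuclideanSpace ℝ (Fin 2) => ((x 0 : ℝ), (x 1 : ℝ))) volume volume := by
      have h1 := EuclideanSpace.volume_preserving_symm_measurableEquiv_toLp (Fin 2)
      have h2 := MeasureTheory.volume_preserving_finTwoArrow ℝ
      exact h2.comp h1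
    rw [← mp.measure_preimage hA.nullMeasurableSet]
    congr 1
    have h0 : (0 : EuclideanSpace ℝ (Fin 2)) = EuclideanSpace.single (0 : Fin 2) (0:ℝ) := by
      ext i; fin_cases i <;> simp [EuclideanSpace.single_apply]
    rw [h0, ball_eq 0 r₁ h₁, ball_eq d r₂ h₂]
    ext x
    simp [sub_zero]
  rw [SI, key, Measure.volume_eq_prod, Measure.prod_apply hA]
  have slices : ∀ x : ℝ, volume (Prod.mk x ⁻¹' {p : ℝ × ℝ | p.1^2 + p.2^2 ≤ r₁^2 ∧ (p.1 - d)^2 + p.2^2 ≤ r₂^2})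
      = ENNReal.ofReal (2 * Real.sqrt (min (r₁^2 - x^2) (r₂^2 - (x - d)^2))) := by
    intro x
    have : (Prod.mk x ⁻¹' {p : ℝ × ℝ | p.1^2 + p.2^2 ≤ r₁^2 ∧ (p.1 - d)^2 + p.2^2 ≤ r₂^2})
        = {y : ℝ | y^2 ≤ min (r₁^2 - x^2) (r₂^2 - (x - d)^2)} := by
      ext y
      simp only [Set.mem_preimage, Set.mem_setOf_eq, le_min_iff]
      constructor <;> intro h <;> exact ⟨by linarith [h.1, h.2], by linarith [h.1, h.2]⟩
    rw [this, vol_slice]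
  simp_rw [slices]
  rw [← MeasureTheory.ofReal_integral_eq_lintegral_ofReal (g_integrable d r₁ r₂ h₁)
    (Filter.Eventually.of_forall fun x => by positivity)]
  rw [ENNReal.toReal_ofReal (integral_nonneg fun x => by positivity)]

lemma vol_ball (x : EuclideanSpace ℝ (Fin 2)) (r : ℝ) (hr : 0 ≤ r) :
    (volume (closedBall x r)).toReal = π * r^2 := by
  rw [EuclideanSpace.volume_closedBall]
  simp only [Fintype.card_fin]
  rw [show ((2:ℕ) : ℝ) / 2 + 1 = 2 by norm_num, Real.Gamma_two]
  rw [Real.sq_sqrt pi_nonneg]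
  rw [ENNReal.toReal_mul, ENNReal.toReal_pow, ENNReal.toReal_ofReal hr,
    ENNReal.toReal_ofReal (by positivity)]
  ring

lemma dist_single (d : ℝ) : dist (EuclideanSpace.single (0 : Fin 2) d) (0 : EuclideanSpace ℝ (Fin 2)) = |d| := by
  simp [dist_eq_norm, EuclideanSpace.norm_single]

lemma SI_inside_right (d r₁ r₂ : ℝ) (hd : 0 ≤ d) (h : d + r₂ ≤ r₁) (h2 : 0 ≤ r₂) :
    SI d r₁ r₂ = π * r₂^2 := by
  have hsub : (closedBall (EuclideanSpace.single (0 : Fin 2) d) r₂ : Set (EuclideanSpace ℝ (Fin 2)))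
      ⊆ closedBall 0 r₁ := by
    apply closedBall_subset_closedBall'
    rw [dist_single d, abs_of_nonneg hd]; linarith
  rw [SI, Set.inter_eq_right.mpr hsub, vol_ball _ _ h2]

lemma SI_inside_left (d r₁ r₂ : ℝ) (hd : 0 ≤ d) (h : d + r₁ ≤ r₂) (h1 : 0 ≤ r₁) :
    SI d r₁ r₂ = π * r₁^2 := by
  have hsub : (closedBall (0 : EuclideanSpace ℝ (Fin 2)) r₁ : Set (EuclideanSpace ℝ (Fin 2)))
      ⊆ closedBall (EuclideanSpace.single (0 : Fin 2) d) r₂ := by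
    apply closedBall_subset_closedBall'
    rw [dist_comm, dist_single d, abs_of_nonneg hd]; linarith
  rw [SI, Set.inter_eq_left.mpr hsub, vol_ball _ _ h1]

lemma phi_deriv (r x : ℝ) (hr : 0 < r) (hx1 : -r < x) (hx2 : x < r) :
    HasDerivAt (fun y => y * Real.sqrt (r^2 - y^2) + r^2 * arcsin (y / r))
      (2 * Real.sqrt (r^2 - x^2)) x := by
  have hpos : 0 < r^2 - x^2 := by nlinarith
  have hs : 0 < Real.sqrt (r^2 - x^2) := Real.sqrt_pos.mpr hpos
  have h1 : HasDerivAt (fun y : ℝ => r^2 - y^2) (-(2*x)) x := by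
    simpa using ((hasDerivAt_pow 2 x).const_sub (r^2))
  have hsqrt : HasDerivAt (fun y : ℝ => Real.sqrt (r^2 - y^2))
      (1 / (2 * Real.sqrt (r^2 - x^2)) * (-(2*x))) x :=
    (Real.hasDerivAt_sqrt hpos.ne').comp x h1
  have hmul : HasDerivAt (fun y : ℝ => y * Real.sqrt (r^2 - y^2))
      (1 * Real.sqrt (r^2 - x^2) + x * (1 / (2 * Real.sqrt (r^2 - x^2)) * (-(2*x)))) x :=
    (hasDerivAt_id x).mul hsqrt
  have hdiv : HasDerivAt (fun y : ℝ => y / r) (1 / r) x := by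
    simpa using (hasDerivAt_id x).div_const r
  have hxr1 : x / r ≠ -1 := by
    intro h; rw [div_eq_iff hr.ne'] at h; simp at h; linarith
  have hxr2 : x / r ≠ 1 := by
    intro h; rw [div_eq_iff hr.ne'] at h; simp at h; linarith
  have harcsin : HasDerivAt (fun y : ℝ => arcsin (y / r))
      (1 / Real.sqrt (1 - (x/r)^2) * (1 / r)) x :=
    by have := (Real.hasDerivAt_arcsin hxr1 hxr2).comp x hdiv; exact this
  have hsq : Real.sqrt (1 - (x/r)^2) = Real.sqrt (r^2 - x^2) / r := by
    rw [show (1 - (x/r)^2) = (r^2 - x^2) / r^2 by field_simp,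
      Real.sqrt_div hpos.le, Real.sqrt_sq hr.le]
  have total := hmul.add (harcsin.const_mul (r^2))
  refine total.congr_deriv ?_
  rw [hsq]
  have hs2 : Real.sqrt (r^2 - x^2) ^ 2 = r^2 - x^2 := Real.sq_sqrt hpos.le
  field_simp
  linear_combination (-1) * hs2

lemma integral_segment (r a b : ℝ) (hr : 0 < r) (ha : -r ≤ a) (hb : b ≤ r) (hab : a ≤ b) :
    ∫ x in a..b, 2 * Real.sqrt (r^2 - x^2)
      = (b * Real.sqrt (r^2 - b^2) + r^2 * arcsin (b / r))
        - (a * Real.sqrt (r^2 - a^2) + r^2 * arcsin (a / r)) := by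
  apply intervalIntegral.integral_eq_sub_of_hasDeriv_right_of_le hab
  · apply Continuous.continuousOn
    have : Continuous (fun y : ℝ => Real.sqrt (r^2 - y^2)) := by fun_prop
    exact (continuous_id.mul this).add (continuous_const.mul (Real.continuous_arcsin.comp (continuous_id.div_const r)))
  · intro x hx
    exact (phi_deriv r x hr (lt_of_le_of_lt ha hx.1) (lt_of_lt_of_le hx.2 hb)).hasDerivWithinAt
  · apply Continuous.intervalIntegrable
    fun_prop

set_option maxHeartbeats 1000000 in
lemma lens_formula (d r₁ r₂ : ℝ) (h₁ : 0 < r₁) (h₂ : 0 < r₂)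
    (hd1 : |r₁ - r₂| < d) (hd2 : d < r₁ + r₂) :
    SI d r₁ r₂ = r₁^2 * arccos ((d^2 + r₁^2 - r₂^2) / (2*d*r₁))
      + r₂^2 * arccos ((d^2 + r₂^2 - r₁^2) / (2*d*r₂))
      - Real.sqrt ((r₁+r₂+d)*(r₁+r₂-d)*(d+r₁-r₂)*(d+r₂-r₁)) / 2 := by
  have hd0 : 0 < d := lt_of_le_of_lt (abs_nonneg _) hd1
  have habs1 : r₁ - r₂ < d := lt_of_le_of_lt (le_abs_self _) hd1
  have habs2 : r₂ - r₁ < d := lt_of_le_of_lt (by rw [show r₂ - r₁ = -(r₁ - r₂) by ring]; exact neg_le_abs _) hd1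
  set P := (r₁+r₂+d)*(r₁+r₂-d)*(d+r₁-r₂)*(d+r₂-r₁) with hP
  have hPpos : 0 < P := by
    apply mul_pos (mul_pos (mul_pos (by linarith) (by linarith)) (by linarith)) (by linarith)
  set x₀ := (d^2 + r₁^2 - r₂^2) / (2*d) with hx₀
  have hsq1 : r₁^2 - x₀^2 = P / (2*d)^2 := by
    rw [hx₀, hP]; field_simp; ring
  have hsq2 : r₂^2 - (x₀ - d)^2 = P / (2*d)^2 := by
    rw [hx₀, hP]; field_simp; ring
  have hsqrtP : Real.sqrt (P / (2*d)^2) = Real.sqrt P / (2*d) := by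
    rw [Real.sqrt_div hPpos.le, Real.sqrt_sq (by linarith)]
  have hx₀le : x₀ ≤ r₁ := by
    rw [hx₀, div_le_iff₀ (by linarith)]; nlinarith
  have hx₀ge : d - r₂ ≤ x₀ := by
    rw [hx₀, le_div_iff₀ (by linarith)]; nlinarith
  have hx₀d_le : x₀ - d ≤ r₂ := by
    rw [hx₀]; rw [sub_le_iff_le_add, div_le_iff₀ (by linarith)]; nlinarith
  have hx₀d_ge : -r₂ ≤ x₀ - d := by linarith
  have hmr₁ : -r₁ ≤ x₀ := by nlinarith
  -- step 1: reduce whole-line integral to interval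
  rw [SI_eq_integral d r₁ r₂ h₁.le h₂.le]
  have hsupp : ∀ x : ℝ, x ∉ Set.Ioc (d - r₂) r₁ →
      2 * Real.sqrt (min (r₁^2 - x^2) (r₂^2 - (x - d)^2)) = 0 := by
    intro x hx
    simp only [Set.mem_Ioc, not_and_or, not_lt, not_le] at hx
    have : min (r₁^2 - x^2) (r₂^2 - (x - d)^2) ≤ 0 := by
      rcases hx with h | h
      · exact le_trans (min_le_right _ _) (by nlinarith)
      · exact le_trans (min_le_left _ _) (by nlinarith)
    rw [Real.sqrt_eq_zero_of_nonpos this, mul_zero]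
  rw [← MeasureTheory.setIntegral_eq_integral_of_forall_compl_eq_zero hsupp]
  rw [← intervalIntegral.integral_of_le (by linarith : d - r₂ ≤ r₁)]
  -- step 2: split at x₀
  rw [← intervalIntegral.integral_add_adjacent_intervals
    (a := d - r₂) (b := x₀) (c := r₁)
    ((g_cont d r₁ r₂).intervalIntegrable _ _) ((g_cont d r₁ r₂).intervalIntegrable _ _)]
  -- step 3: evaluate each piece
  have piece1 : ∫ x in (d - r₂)..x₀, 2 * Real.sqrt (min (r₁^2 - x^2) (r₂^2 - (x - d)^2))
      = ∫ x in (d - r₂)..x₀, 2 * Real.sqrt (r₂^2 - (x - d)^2) := by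
    apply intervalIntegral.integral_congr
    intro x hx
    rw [Set.uIcc_of_le (by linarith)] at hx
    have : r₂^2 - (x - d)^2 ≤ r₁^2 - x^2 := by
      have hxle : x ≤ x₀ := hx.2
      rw [hx₀] at hxle
      rw [le_div_iff₀ (by linarith)] at hxle
      nlinarith
    simp only [min_eq_right this]
  have piece2 : ∫ x in x₀..r₁, 2 * Real.sqrt (min (r₁^2 - x^2) (r₂^2 - (x - d)^2))
      = ∫ x in x₀..r₁, 2 * Real.sqrt (r₁^2 - x^2) := by
    apply intervalIntegral.integral_congr
    intro x hx
    rw [Set.uIcc_of_le hx₀le] at hx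
    have : r₁^2 - x^2 ≤ r₂^2 - (x - d)^2 := by
      have hxge : x₀ ≤ x := hx.1
      rw [hx₀] at hxge
      rw [div_le_iff₀ (by linarith)] at hxge
      nlinarith
    simp only [min_eq_left this]
  rw [piece1, piece2]
  have shift : ∫ x in (d - r₂)..x₀, 2 * Real.sqrt (r₂^2 - (x - d)^2)
      = ∫ x in (-r₂)..(x₀ - d), 2 * Real.sqrt (r₂^2 - x^2) := by
    rw [intervalIntegral.integral_comp_sub_right (fun x => 2 * Real.sqrt (r₂^2 - x^2)) d]
    congr 1
    ring
  rw [shift, integral_segment r₂ (-r₂) (x₀ - d) h₂ le_rfl hx₀d_le (by linarith),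
    integral_segment r₁ x₀ r₁ h₁ hmr₁ le_rfl hx₀le]
  rw [hsq1, hsq2, hsqrtP]
  rw [show r₂^2 - (-r₂)^2 = 0 by ring, show r₁^2 - r₁^2 = 0 by ring, Real.sqrt_zero]
  rw [show (-r₂)/r₂ = -1 by field_simp, show r₁/r₁ = 1 by field_simp]
  rw [Real.arcsin_neg, Real.arcsin_one]
  rw [show (d^2 + r₁^2 - r₂^2) / (2*d*r₁) = x₀ / r₁ by rw [hx₀]; field_simp; try ring]
  rw [show (d^2 + r₂^2 - r₁^2) / (2*d*r₂) = -((x₀ - d) / r₂) by rw [hx₀]; field_simp; try ring]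
  rw [Real.arccos_neg, Real.arccos_eq_pi_div_two_sub_arcsin, Real.arccos_eq_pi_div_two_sub_arcsin]
  have harc1 : arcsin ((x₀ - d)/r₂) = arcsin ((x₀ - d)/r₂) := rfl
  field_simp
  ring

lemma SI_eq_L (r R t : ℝ) (hr : 0 < r) (hR : 0 < R) (ht : |R - r| ≤ t) (ht2 : t < R + r) :
    SI t R r = R^2 * arccos ((R^2 + t^2 - r^2) / (2*R*t))
      + r^2 * arccos ((r^2 + t^2 - R^2) / (2*r*t))
      - Real.sqrt (2*(r^2+R^2)*t^2 - t^4 - (r^2-R^2)^2) / 2 := by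
  rcases lt_or_eq_of_le ht with hlt | heq
  · rw [lens_formula t R r hR hr hlt (by linarith)]
    rw [show (t^2 + R^2 - r^2)/(2*t*R) = (R^2 + t^2 - r^2)/(2*R*t) by ring_nf,
      show (t^2 + r^2 - R^2)/(2*t*r) = (r^2 + t^2 - R^2)/(2*r*t) by ring_nf,
      show (R+r+t)*(R+r-t)*(t+R-r)*(t+r-R) = 2*(r^2+R^2)*t^2 - t^4 - (r^2-R^2)^2 by ring]
  · rcases lt_trichotomy r R with hc | hc | hc
    · -- t = R - r > 0
      have ht' : t = R - r := by rw [← heq, abs_of_pos (by linarith)]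
      subst ht'
      rw [SI_inside_right (R - r) R r (by linarith) (by linarith) hr.le]
      rw [show (R^2 + (R-r)^2 - r^2)/(2*R*(R-r)) = 1 by
          rw [div_eq_iff (ne_of_gt (by nlinarith))]; ring,
        show (r^2 + (R-r)^2 - R^2)/(2*r*(R-r)) = -1 by
          rw [div_eq_iff (ne_of_gt (by nlinarith))]; ring,
        show 2*(r^2+R^2)*(R-r)^2 - (R-r)^4 - (r^2-R^2)^2 = 0 by ring,
        Real.sqrt_zero, Real.arccos_one, Real.arccos_neg_one]
      ring
    · -- r = R, t = 0
      have ht' : t = 0 := by rw [← heq, hc]; simp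
      subst ht'
      subst hc
      rw [SI_inside_right 0 r r le_rfl (by linarith) hr.le]
      norm_num [Real.arccos_zero]
      ring
    · have ht' : t = r - R := by rw [← heq, abs_of_neg (by linarith)]; ring
      subst ht'
      rw [SI_inside_left (r - R) R r (by linarith) (by linarith) hR.le]
      rw [show (R^2 + (r-R)^2 - r^2)/(2*R*(r-R)) = -1 by
          rw [div_eq_iff (ne_of_gt (by nlinarith))]; ring,
        show (r^2 + (r-R)^2 - R^2)/(2*r*(r-R)) = 1 by
          rw [div_eq_iff (ne_of_gt (by nlinarith))]; ring,
        show 2*(r^2+R^2)*(r-R)^2 - (r-R)^4 - (r^2-R^2)^2 = 0 by ring,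
        Real.sqrt_zero, Real.arccos_one, Real.arccos_neg_one]
      ring

set_option maxHeartbeats 2000000 in
lemma F_hasDeriv (r R t : ℝ) (hr : 0 < r) (hR : 0 < R)
    (hgt : |R - r| < t) (hlt : t < R + r) :
    HasDerivAt (fun u : ℝ =>
      (1/2) * π * r^2
      + u^2 * arccos ((R^2 + u^2 - r^2) / (2*R*u))
      + (r^2 * u^2 / R^2) * arccos ((r^2 + u^2 - R^2) / (2*r*u))
      - r^2 * arcsin ((r^2 + R^2 - u^2) / (2*r*R))
      - ((u^2 + r^2 + R^2) / (4*R^2)) * Real.sqrt (2*(r^2+R^2)*u^2 - u^4 - (r^2-R^2)^2))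
    ((2/R^2) * (t * (R^2 * arccos ((R^2 + t^2 - r^2) / (2*R*t))
      + r^2 * arccos ((r^2 + t^2 - R^2) / (2*r*t))
      - Real.sqrt (2*(r^2+R^2)*t^2 - t^4 - (r^2-R^2)^2) / 2))) t := by
  have ht0 : 0 < t := lt_of_le_of_lt (abs_nonneg _) hgt
  have habs := abs_lt.mp hgt
  have hQt : 0 < 2*(r^2+R^2)*t^2 - t^4 - (r^2-R^2)^2 := by
    have : 2*(r^2+R^2)*t^2 - t^4 - (r^2-R^2)^2
        = (r+R+t)*(r+R-t)*(r-R+t)*(R-r+t) := by ring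
    rw [this]
    have f1 : 0 < r+R+t := by linarith
    have f2 : 0 < r+R-t := by linarith
    have f3 : 0 < r-R+t := by linarith [habs.2]
    have f4 : 0 < R-r+t := by linarith [habs.1]
    positivity
  set s := Real.sqrt (2*(r^2+R^2)*t^2 - t^4 - (r^2-R^2)^2) with hs
  have hs0 : 0 < s := Real.sqrt_pos.mpr hQt
  have hs2 : s^2 = 2*(r^2+R^2)*t^2 - t^4 - (r^2-R^2)^2 := Real.sq_sqrt hQt.le
  -- derivative of Q
  have hQ' : HasDerivAt (fun u : ℝ => 2*(r^2+R^2)*u^2 - u^4 - (r^2-R^2)^2)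
      (2*(r^2+R^2)*(2*t^1) - 4*t^3) t := by
    have h4 : HasDerivAt (fun u : ℝ => u^4) (4*t^3) t := by
      simpa using hasDerivAt_pow 4 t
    exact (((hasDerivAt_pow 2 t).const_mul (2*(r^2+R^2))).sub h4).sub_const _
  have hsqrtQ : HasDerivAt (fun u : ℝ => Real.sqrt (2*(r^2+R^2)*u^2 - u^4 - (r^2-R^2)^2))
      (1/(2*s) * (2*(r^2+R^2)*(2*t^1) - 4*t^3)) t :=
    (Real.hasDerivAt_sqrt hQt.ne').comp t hQ'
  -- the a-term
  have hden_a : (2*R*t) ≠ 0 := by positivity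
  have h1a : 1 - ((R^2 + t^2 - r^2)/(2*R*t))^2
      = (2*(r^2+R^2)*t^2 - t^4 - (r^2-R^2)^2) / (2*R*t)^2 := by
    field_simp; ring
  have hsa : Real.sqrt (1 - ((R^2 + t^2 - r^2)/(2*R*t))^2) = s / (2*R*t) := by
    rw [h1a, Real.sqrt_div hQt.le, Real.sqrt_sq (by positivity)]
  have haval : ((R^2 + t^2 - r^2)/(2*R*t))^2 < 1 := by
    nlinarith [h1a, div_pos hQt (by positivity : (0:ℝ) < (2*R*t)^2)]
  have hane1 : (R^2 + t^2 - r^2)/(2*R*t) ≠ 1 := by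
    intro h; rw [h] at haval; norm_num at haval
  have hanem1 : (R^2 + t^2 - r^2)/(2*R*t) ≠ -1 := by
    intro h; rw [h] at haval; norm_num at haval
  have ha : HasDerivAt (fun u : ℝ => (R^2 + u^2 - r^2)/(2*R*u))
      (((2*t^1) * (2*R*t) - (R^2 + t^2 - r^2) * (2*R*1)) / (2*R*t)^2) t := by
    exact HasDerivAt.div (((hasDerivAt_pow 2 t).const_add (R^2)).sub_const (r^2))
      ((hasDerivAt_id t).const_mul (2*R)) hden_a
  have hA : HasDerivAt (fun u : ℝ => u^2 * arccos ((R^2 + u^2 - r^2)/(2*R*u)))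
      ((2*t^1) * arccos ((R^2 + t^2 - r^2)/(2*R*t))
        + t^2 * (-(1 / Real.sqrt (1 - ((R^2 + t^2 - r^2)/(2*R*t))^2))
            * (((2*t^1) * (2*R*t) - (R^2 + t^2 - r^2) * (2*R*1)) / (2*R*t)^2))) t :=
    (hasDerivAt_pow 2 t).mul (by have := (Real.hasDerivAt_arccos hanem1 hane1).comp t ha; exact this)
  -- the b-term
  have hden_b : (2*r*t) ≠ 0 := by positivity
  have h1b : 1 - ((r^2 + t^2 - R^2)/(2*r*t))^2
      = (2*(r^2+R^2)*t^2 - t^4 - (r^2-R^2)^2) / (2*r*t)^2 := by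
    field_simp; ring
  have hsb : Real.sqrt (1 - ((r^2 + t^2 - R^2)/(2*r*t))^2) = s / (2*r*t) := by
    rw [h1b, Real.sqrt_div hQt.le, Real.sqrt_sq (by positivity)]
  have hbval : ((r^2 + t^2 - R^2)/(2*r*t))^2 < 1 := by
    nlinarith [h1b, div_pos hQt (by positivity : (0:ℝ) < (2*r*t)^2)]
  have hbne1 : (r^2 + t^2 - R^2)/(2*r*t) ≠ 1 := by
    intro h; rw [h] at hbval; norm_num at hbval
  have hbnem1 : (r^2 + t^2 - R^2)/(2*r*t) ≠ -1 := by
    intro h; rw [h] at hbval; norm_num at hbval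
  have hb : HasDerivAt (fun u : ℝ => (r^2 + u^2 - R^2)/(2*r*u))
      (((2*t^1) * (2*r*t) - (r^2 + t^2 - R^2) * (2*r*1)) / (2*r*t)^2) t := by
    exact HasDerivAt.div (((hasDerivAt_pow 2 t).const_add (r^2)).sub_const (R^2))
      ((hasDerivAt_id t).const_mul (2*r)) hden_b
  have hcoef : HasDerivAt (fun u : ℝ => r^2 * u^2 / R^2) (r^2 * (2*t^1) / R^2) t :=
    ((hasDerivAt_pow 2 t).const_mul (r^2)).div_const (R^2)
  have hB : HasDerivAt (fun u : ℝ => (r^2 * u^2 / R^2) * arccos ((r^2 + u^2 - R^2)/(2*r*u)))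
      ((r^2 * (2*t^1) / R^2) * arccos ((r^2 + t^2 - R^2)/(2*r*t))
        + (r^2 * t^2 / R^2) * (-(1 / Real.sqrt (1 - ((r^2 + t^2 - R^2)/(2*r*t))^2))
            * (((2*t^1) * (2*r*t) - (r^2 + t^2 - R^2) * (2*r*1)) / (2*r*t)^2))) t :=
    hcoef.mul (by have := (Real.hasDerivAt_arccos hbnem1 hbne1).comp t hb; exact this)
  -- the c-term (arcsin)
  have h1c : 1 - ((r^2 + R^2 - t^2)/(2*r*R))^2
      = (2*(r^2+R^2)*t^2 - t^4 - (r^2-R^2)^2) / (2*r*R)^2 := by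
    field_simp; ring
  have hsc : Real.sqrt (1 - ((r^2 + R^2 - t^2)/(2*r*R))^2) = s / (2*r*R) := by
    rw [h1c, Real.sqrt_div hQt.le, Real.sqrt_sq (by positivity)]
  have hcval : ((r^2 + R^2 - t^2)/(2*r*R))^2 < 1 := by
    nlinarith [h1c, div_pos hQt (by positivity : (0:ℝ) < (2*r*R)^2)]
  have hcne1 : (r^2 + R^2 - t^2)/(2*r*R) ≠ 1 := by
    intro h; rw [h] at hcval; norm_num at hcval
  have hcnem1 : (r^2 + R^2 - t^2)/(2*r*R) ≠ -1 := by
    intro h; rw [h] at hcval; norm_num at hcval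
  have hc : HasDerivAt (fun u : ℝ => (r^2 + R^2 - u^2)/(2*r*R))
      (-(2*t^1) / (2*r*R)) t :=
    (((hasDerivAt_pow 2 t).const_sub (r^2 + R^2))).div_const (2*r*R)
  have hC : HasDerivAt (fun u : ℝ => r^2 * arcsin ((r^2 + R^2 - u^2)/(2*r*R)))
      (r^2 * ((1 / Real.sqrt (1 - ((r^2 + R^2 - t^2)/(2*r*R))^2)) * (-(2*t^1) / (2*r*R)))) t :=
    (((Real.hasDerivAt_arcsin hcnem1 hcne1).comp t hc)).const_mul (r^2)
  -- the last term
  have hcoef2 : HasDerivAt (fun u : ℝ => (u^2 + r^2 + R^2)/(4*R^2)) ((2*t^1)/(4*R^2)) t :=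
    (((hasDerivAt_pow 2 t).add_const (r^2)).add_const (R^2)).div_const (4*R^2)
  have hD : HasDerivAt (fun u : ℝ =>
      ((u^2 + r^2 + R^2)/(4*R^2)) * Real.sqrt (2*(r^2+R^2)*u^2 - u^4 - (r^2-R^2)^2))
      (((2*t^1)/(4*R^2)) * s
        + ((t^2 + r^2 + R^2)/(4*R^2)) * (1/(2*s) * (2*(r^2+R^2)*(2*t^1) - 4*t^3))) t :=
    hcoef2.mul hsqrtQ
  have htotal := (((hA.const_add ((1/2) * π * r^2)).add hB).sub hC).sub hD
  refine htotal.congr_deriv ?_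
  rw [hsa, hsb, hsc]
  field_simp
  linear_combination 4 * hs2

end SIaux

open SIaux

set_option maxHeartbeats 2000000 in
/-- Explicit form of the radial integral `I(ρ) = 2π ∫₀^ρ t · S_I(t, R_p, r_I)/(π R_p²) dt`
for `|R_p − r_I| < ρ < R_p + r_I`. -/
theorem radial_integral_middle (r_I R_p : ℝ) (hrI : 0 < r_I) (hRp : 0 < R_p)
    (ρ : ℝ) (h0 : |R_p - r_I| < ρ) (h1 : ρ < R_p + r_I) :
    2 * π * ∫ t in (0:ℝ)..ρ, t * SI t R_p r_I / (π * R_p ^ 2)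
      = (1 / 2) * π * r_I ^ 2
        + ρ ^ 2 * arccos ((R_p ^ 2 + ρ ^ 2 - r_I ^ 2) / (2 * R_p * ρ))
        + (r_I ^ 2 * ρ ^ 2 / R_p ^ 2) * arccos ((r_I ^ 2 + ρ ^ 2 - R_p ^ 2) / (2 * r_I * ρ))
        - r_I ^ 2 * arcsin ((r_I ^ 2 + R_p ^ 2 - ρ ^ 2) / (2 * r_I * R_p))
        - ((ρ ^ 2 + r_I ^ 2 + R_p ^ 2) / (4 * R_p ^ 2)) *
            Real.sqrt ((r_I + R_p + ρ) * (r_I + R_p - ρ) * (r_I - R_p + ρ) * (R_p - r_I + ρ)) := by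
  have hρ₀nn : (0:ℝ) ≤ |R_p - r_I| := abs_nonneg _
  have hρpos : 0 < ρ := lt_of_le_of_lt hρ₀nn h0
  set ρ₀ := |R_p - r_I| with hρ₀def
  have hρ₀ρ : ρ₀ ≤ ρ := h0.le
  set m := min r_I R_p with hm
  have hm0 : 0 < m := lt_min hrI hRp
  set L : ℝ → ℝ := fun t => R_p^2 * arccos ((R_p^2 + t^2 - r_I^2) / (2*R_p*t))
      + r_I^2 * arccos ((r_I^2 + t^2 - R_p^2) / (2*r_I*t))
      - Real.sqrt (2*(r_I^2+R_p^2)*t^2 - t^4 - (r_I^2-R_p^2)^2) / 2 with hLdef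
  set F : ℝ → ℝ := fun u =>
      (1/2) * π * r_I^2
      + u^2 * arccos ((R_p^2 + u^2 - r_I^2) / (2*R_p*u))
      + (r_I^2 * u^2 / R_p^2) * arccos ((r_I^2 + u^2 - R_p^2) / (2*r_I*u))
      - r_I^2 * arcsin ((r_I^2 + R_p^2 - u^2) / (2*r_I*R_p))
      - ((u^2 + r_I^2 + R_p^2) / (4*R_p^2)) * Real.sqrt (2*(r_I^2+R_p^2)*u^2 - u^4 - (r_I^2-R_p^2)^2)
    with hFdef
  -- SI on the inner interval
  have hSIsmall : ∀ t ∈ Set.Icc (0:ℝ) ρ₀, SI t R_p r_I = π * m^2 := by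
    intro t ht
    rcases le_total r_I R_p with hrR | hrR
    · rw [hm, min_eq_left hrR]
      exact SI_inside_right t R_p r_I ht.1
        (by have := ht.2; rw [hρ₀def, abs_of_nonneg (by linarith)] at this; linarith) hrI.le
    · rw [hm, min_eq_right hrR]
      exact SI_inside_left t R_p r_I ht.1
        (by have := ht.2; rw [hρ₀def, abs_of_nonpos (by linarith)] at this; linarith) hRp.le
  have hSIL : ∀ t ∈ Set.Icc ρ₀ ρ, SI t R_p r_I = L t := by
    intro t ht
    exact SI_eq_L r_I R_p t hrI hRp ht.1 (lt_of_le_of_lt ht.2 h1)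
  -- continuity of arccos arguments
  have hG1 : ContinuousOn (fun t : ℝ => arccos ((R_p^2 + t^2 - r_I^2) / (2*R_p*t)))
      (Set.Icc ρ₀ ρ) := by
    rcases eq_or_ne r_I R_p with hrR | hrR
    · subst hrR
      have : (fun t : ℝ => arccos ((r_I^2 + t^2 - r_I^2) / (2*r_I*t)))
          = fun t : ℝ => arccos (t / (2*r_I)) := by
        funext t
        congr 1
        rcases eq_or_ne t 0 with h | h
        · simp [h]
        · field_simp
          ring
      rw [this]
      exact (Real.continuous_arccos.comp (continuous_id.div_const _)).continuousOn
    · have hρ₀pos : 0 < ρ₀ := by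
        rw [hρ₀def]; exact abs_pos.mpr (sub_ne_zero.mpr (Ne.symm hrR))
      apply Real.continuous_arccos.comp_continuousOn
      apply ContinuousOn.div (by fun_prop) (by fun_prop)
      intro t ht
      have : 0 < t := lt_of_lt_of_le hρ₀pos ht.1
      positivity
  have hG2 : ContinuousOn (fun t : ℝ => arccos ((r_I^2 + t^2 - R_p^2) / (2*r_I*t)))
      (Set.Icc ρ₀ ρ) := by
    rcases eq_or_ne r_I R_p with hrR | hrR
    · subst hrR
      have : (fun t : ℝ => arccos ((r_I^2 + t^2 - r_I^2) / (2*r_I*t)))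
          = fun t : ℝ => arccos (t / (2*r_I)) := by
        funext t
        congr 1
        rcases eq_or_ne t 0 with h | h
        · simp [h]
        · field_simp
          ring
      rw [this]
      exact (Real.continuous_arccos.comp (continuous_id.div_const _)).continuousOn
    · have hρ₀pos : 0 < ρ₀ := by
        rw [hρ₀def]; exact abs_pos.mpr (sub_ne_zero.mpr (Ne.symm hrR))
      apply Real.continuous_arccos.comp_continuousOn
      apply ContinuousOn.div (by fun_prop) (by fun_prop)
      intro t ht
      have : 0 < t := lt_of_lt_of_le hρ₀pos ht.1
      positivity
  have hcontL : ContinuousOn L (Set.Icc ρ₀ ρ) := by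
    rw [hLdef]
    apply ContinuousOn.sub
    · exact (continuousOn_const.mul hG1).add (continuousOn_const.mul hG2)
    · apply Continuous.continuousOn
      fun_prop
  have hcontF : ContinuousOn F (Set.Icc ρ₀ ρ) := by
    rw [hFdef]
    apply ContinuousOn.sub
    apply ContinuousOn.sub
    apply ContinuousOn.add
    apply ContinuousOn.add
    · exact continuousOn_const
    · exact ((continuous_pow 2).continuousOn).mul hG1
    · exact (Continuous.continuousOn (by fun_prop)).mul hG2
    · apply Continuous.continuousOn
      have : Continuous (fun u : ℝ => (r_I^2 + R_p^2 - u^2) / (2*r_I*R_p)) := by fun_prop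
      exact continuous_const.mul (Real.continuous_arcsin.comp this)
    · apply Continuous.continuousOn
      fun_prop
  -- interval integrability of the two pieces of f
  have hint1 : IntervalIntegrable (fun t => t * SI t R_p r_I / (π * R_p ^ 2)) volume 0 ρ₀ := by
    rw [intervalIntegrable_iff_integrableOn_Ioc_of_le hρ₀nn]
    apply IntegrableOn.congr_fun
      (f := fun t : ℝ => t * (π * m^2) / (π * R_p ^ 2))
    · exact (by fun_prop : Continuous fun t : ℝ => t * (π * m^2) / (π * R_p ^ 2)).integrableOn_Ioc
    · intro t ht
      show t * (π * m^2) / (π * R_p ^ 2) = t * SI t R_p r_I / (π * R_p ^ 2)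
      rw [hSIsmall t ⟨ht.1.le, ht.2⟩]
    · exact measurableSet_Ioc
  have hint2 : IntervalIntegrable (fun t => t * SI t R_p r_I / (π * R_p ^ 2)) volume ρ₀ ρ := by
    rw [intervalIntegrable_iff_integrableOn_Ioc_of_le hρ₀ρ]
    apply IntegrableOn.congr_fun (f := fun t : ℝ => t * L t / (π * R_p ^ 2))
    · apply IntegrableOn.mono_set (t := Set.Icc ρ₀ ρ) _ Set.Ioc_subset_Icc_self
      apply ContinuousOn.integrableOn_Icc
      exact ((continuousOn_id.mul hcontL).div_const _)
    · intro t ht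
      show t * L t / (π * R_p ^ 2) = t * SI t R_p r_I / (π * R_p ^ 2)
      rw [hSIL t ⟨ht.1.le, ht.2⟩]
    · exact measurableSet_Ioc
  -- FTC on [ρ₀, ρ]
  have hFTC : ∫ t in ρ₀..ρ, (2/R_p^2) * (t * L t) = F ρ - F ρ₀ := by
    apply intervalIntegral.integral_eq_sub_of_hasDeriv_right_of_le hρ₀ρ hcontF
    · intro x hx
      have hd := F_hasDeriv r_I R_p x hrI hRp (by rw [← hρ₀def]; exact hx.1)
        (by linarith [hx.2])
      exact hd.hasDerivWithinAt
    · apply ContinuousOn.intervalIntegrable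
      rw [Set.uIcc_of_le hρ₀ρ]
      exact continuousOn_const.mul (continuousOn_id.mul hcontL)
  -- split the integral
  rw [← intervalIntegral.integral_add_adjacent_intervals hint1 hint2]
  -- first piece
  have hI1 : ∫ t in (0:ℝ)..ρ₀, t * SI t R_p r_I / (π * R_p ^ 2)
      = ρ₀^2 / 2 * (π * m^2 / (π * R_p ^ 2)) := by
    rw [intervalIntegral.integral_congr (g := fun t => t * (π * m^2 / (π * R_p ^ 2)))
      (by intro t ht
          rw [Set.uIcc_of_le hρ₀nn] at ht
          show t * SI t R_p r_I / (π * R_p ^ 2) = t * (π * m ^ 2 / (π * R_p ^ 2))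
          rw [hSIsmall t ht, mul_div_assoc])]
    rw [intervalIntegral.integral_mul_const, integral_id]
    norm_num
  -- second piece
  have hI2 : 2 * π * ∫ t in ρ₀..ρ, t * SI t R_p r_I / (π * R_p ^ 2) = F ρ - F ρ₀ := by
    rw [← hFTC, ← intervalIntegral.integral_const_mul]
    apply intervalIntegral.integral_congr
    intro t ht
    rw [Set.uIcc_of_le hρ₀ρ] at ht
    show 2 * π * (t * SI t R_p r_I / (π * R_p ^ 2)) = 2 / R_p ^ 2 * (t * L t)
    rw [hSIL t ht]
    field_simp
  -- value of F at ρ₀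
  have hFρ₀ : F ρ₀ = π * m^2 * ρ₀^2 / R_p^2 := by
    rcases lt_trichotomy r_I R_p with hc | hc | hc
    · have hρ₀eq : ρ₀ = R_p - r_I := by rw [hρ₀def, abs_of_pos (by linarith)]
      rw [hm, min_eq_left hc.le, hFdef]
      simp only [hρ₀eq]
      rw [show (R_p^2 + (R_p - r_I)^2 - r_I^2) / (2*R_p*(R_p - r_I)) = 1 by
          rw [div_eq_iff (ne_of_gt (by nlinarith))]; ring,
        show (r_I^2 + (R_p - r_I)^2 - R_p^2) / (2*r_I*(R_p - r_I)) = -1 by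
          rw [div_eq_iff (ne_of_gt (by nlinarith))]; ring,
        show (r_I^2 + R_p^2 - (R_p - r_I)^2) / (2*r_I*R_p) = 1 by
          rw [div_eq_iff (ne_of_gt (by positivity))]; ring,
        show 2*(r_I^2+R_p^2)*(R_p - r_I)^2 - (R_p - r_I)^4 - (r_I^2-R_p^2)^2 = 0 by ring,
        Real.sqrt_zero, Real.arccos_one, Real.arccos_neg_one, Real.arcsin_one]
      field_simp
      ring
    · have hρ₀eq : ρ₀ = 0 := by rw [hρ₀def, hc]; simp
      rw [hm, min_eq_left hc.le, hFdef]
      simp only [hρ₀eq]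
      rw [hc]
      rw [show (R_p^2 + R_p^2 - (0:ℝ)^2) / (2*R_p*R_p) = 1 by
          rw [div_eq_iff (ne_of_gt (by positivity))]; ring,
        Real.arcsin_one,
        show 2*(R_p^2+R_p^2)*(0:ℝ)^2 - (0:ℝ)^4 - (R_p^2-R_p^2)^2 = 0 by ring,
        Real.sqrt_zero]
      ring
    · have hρ₀eq : ρ₀ = r_I - R_p := by
        rw [hρ₀def, abs_of_neg (by linarith)]; ring
      rw [hm, min_eq_right hc.le, hFdef]
      simp only [hρ₀eq]
      rw [show (R_p^2 + (r_I - R_p)^2 - r_I^2) / (2*R_p*(r_I - R_p)) = -1 by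
          rw [div_eq_iff (ne_of_gt (by nlinarith))]; ring,
        show (r_I^2 + (r_I - R_p)^2 - R_p^2) / (2*r_I*(r_I - R_p)) = 1 by
          rw [div_eq_iff (ne_of_gt (by nlinarith))]; ring,
        show (r_I^2 + R_p^2 - (r_I - R_p)^2) / (2*r_I*R_p) = 1 by
          rw [div_eq_iff (ne_of_gt (by positivity))]; ring,
        show 2*(r_I^2+R_p^2)*(r_I - R_p)^2 - (r_I - R_p)^4 - (r_I^2-R_p^2)^2 = 0 by ring,
        Real.sqrt_zero, Real.arccos_one, Real.arccos_neg_one, Real.arcsin_one]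
      field_simp
      ring
  -- assemble
  rw [mul_add, hI1, hI2, hFρ₀]
  rw [hFdef]
  simp only
  rw [show (r_I + R_p + ρ) * (r_I + R_p - ρ) * (r_I - R_p + ρ) * (R_p - r_I + ρ)
      = 2*(r_I^2+R_p^2)*ρ^2 - ρ^4 - (r_I^2-R_p^2)^2 by ring]
  field_simp
  ring
end

section
/- Let r_I, R_p > 0 and define I(ρ) = 2π ∫₀^ρ t · S_I(t, R_p, r_I)/(π R_p²) dt. Then for every ρ ≥ R_p + r_I, one has I(ρ) = π r_I². -/
open MeasureTheory Metric Real

local notation "E2" => EuclideanSpace ℝ (Fin 2)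

lemma vol_closedBall_E2 (x : EuclideanSpace ℝ (Fin 2)) (r : ℝ) (hr : 0 ≤ r) :
    volume (closedBall x r) = ENNReal.ofReal (π * r ^ 2) := by
  rw [EuclideanSpace.volume_closedBall]
  simp only [Fintype.card_fin]
  have h1 : ((2 : ℕ) : ℝ) / 2 + 1 = 2 := by norm_num
  rw [h1, Real.Gamma_two, Real.sq_sqrt pi_nonneg]
  rw [← ENNReal.ofReal_pow hr, ← ENNReal.ofReal_mul (by positivity)]
  ring_nf

lemma vol_ball_E2_one : (volume (ball (0 : EuclideanSpace ℝ (Fin 2)) 1)).toReal = π := by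
  rw [EuclideanSpace.volume_ball]
  simp only [Fintype.card_fin]
  have h1 : ((2 : ℕ) : ℝ) / 2 + 1 = 2 := by norm_num
  rw [h1, Real.Gamma_two, Real.sq_sqrt pi_nonneg]
  simp [ENNReal.toReal_ofReal pi_nonneg]

lemma SI_nonneg (d r₁ r₂ : ℝ) : 0 ≤ SI d r₁ r₂ := ENNReal.toReal_nonneg

lemma SI_zero_of_lt {d r₁ r₂ : ℝ} (hd : r₁ + r₂ < d) : SI d r₁ r₂ = 0 := by
  have : (closedBall (0 : EuclideanSpace ℝ (Fin 2)) r₁ ∩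
      closedBall (EuclideanSpace.single (0 : Fin 2) d) r₂) = ∅ := by
    ext z
    simp only [Set.mem_inter_iff, mem_closedBall, Set.mem_empty_iff_false, iff_false, not_and]
    intro h1 h2
    have hnorm : dist (0 : EuclideanSpace ℝ (Fin 2)) (EuclideanSpace.single (0 : Fin 2) d) = |d| := by
      rw [dist_comm, dist_zero_right, EuclideanSpace.norm_single]
      rfl
    have := dist_triangle (0 : EuclideanSpace ℝ (Fin 2)) z (EuclideanSpace.single (0 : Fin 2) d)
    rw [hnorm, dist_comm (0 : EuclideanSpace ℝ (Fin 2)) z] at this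
    have hd' : d ≤ |d| := le_abs_self d
    linarith
  rw [SI, this, measure_empty, ENNReal.toReal_zero]

/-- Rotation invariance: the lens area only depends on the distance between centers. -/
lemma SI_norm (x : EuclideanSpace ℝ (Fin 2)) (r₁ r₂ : ℝ) :
    (volume (closedBall (0 : EuclideanSpace ℝ (Fin 2)) r₁ ∩ closedBall x r₂)).toReal
      = SI (‖x‖) r₁ r₂ := by
  set c : EuclideanSpace ℝ (Fin 2) := EuclideanSpace.single (0 : Fin 2) ‖x‖ with hc
  have hnc : ‖c‖ = ‖x‖ := by
    rw [hc, EuclideanSpace.norm_single, norm_norm]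
  set T := Submodule.reflection (ℝ ∙ (c - x))ᗮ with hT
  have hTc : T c = x := Submodule.reflection_sub hnc
  have hTx : T x = c := by
    have := Submodule.reflection_involutive (ℝ ∙ (c - x))ᗮ c
    rw [hTc] at this
    exact this
  have hpre : T ⁻¹' (closedBall (0 : EuclideanSpace ℝ (Fin 2)) r₁ ∩ closedBall x r₂)
      = closedBall (0 : EuclideanSpace ℝ (Fin 2)) r₁ ∩ closedBall c r₂ := by
    ext z
    simp only [Set.mem_preimage, Set.mem_inter_iff, mem_closedBall, dist_zero_right]
    constructor
    · rintro ⟨h1, h2⟩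
      refine ⟨by rwa [T.norm_map] at h1, ?_⟩
      have : dist (T z) x = dist z c := by
        rw [← hTc]; exact T.dist_map z c
      rwa [this] at h2
    · rintro ⟨h1, h2⟩
      refine ⟨by rwa [T.norm_map], ?_⟩
      have : dist (T z) x = dist z c := by
        rw [← hTc]; exact T.dist_map z c
      rwa [this]
  have hmp := T.measurePreserving
  have := hmp.measure_preimage
    ((measurableSet_closedBall.inter measurableSet_closedBall :
      MeasurableSet (closedBall (0 : EuclideanSpace ℝ (Fin 2)) r₁ ∩ closedBall x r₂))).nullMeasurableSet
  rw [hpre] at this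
  rw [SI, ← this]

lemma measurable_SI (r₁ r₂ : ℝ) : Measurable fun d : ℝ => SI d r₁ r₂ := by
  have hS : MeasurableSet {p : ℝ × EuclideanSpace ℝ (Fin 2) |
      p.2 ∈ closedBall (0 : EuclideanSpace ℝ (Fin 2)) r₁ ∧
      dist p.2 (EuclideanSpace.single (0 : Fin 2) p.1) ≤ r₂} := by
    have hsingle : Continuous (fun t : ℝ => EuclideanSpace.single (0 : Fin 2) t) := by
      have : Isometry (fun t : ℝ => EuclideanSpace.single (0 : Fin 2) t) := by
        intro a b
        rw [EuclideanSpace.edist_single_same]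
      exact this.continuous
    have h1 : IsClosed {p : ℝ × EuclideanSpace ℝ (Fin 2) |
        p.2 ∈ closedBall (0 : EuclideanSpace ℝ (Fin 2)) r₁} :=
      isClosed_closedBall.preimage continuous_snd
    have h2 : IsClosed {p : ℝ × EuclideanSpace ℝ (Fin 2) |
        dist p.2 (EuclideanSpace.single (0 : Fin 2) p.1) ≤ r₂} :=
      isClosed_le (continuous_snd.dist (hsingle.comp continuous_fst)) continuous_const
    exact (h1.inter h2).measurableSet
  have key := (measurable_measure_prodMk_left (ν := volume) hS).ennreal_toReal
  have heq : (fun d : ℝ => SI d r₁ r₂) = fun d =>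
      (volume (Prod.mk d ⁻¹' {p : ℝ × EuclideanSpace ℝ (Fin 2) |
        p.2 ∈ closedBall (0 : EuclideanSpace ℝ (Fin 2)) r₁ ∧
        dist p.2 (EuclideanSpace.single (0 : Fin 2) p.1) ≤ r₂})).toReal := by
    funext d
    show SI d r₁ r₂ = _
    unfold SI
    rfl
  rw [heq]
  exact key

lemma measurable_SInorm (r₁ r₂ : ℝ) :
    Measurable fun x : EuclideanSpace ℝ (Fin 2) =>
      volume (closedBall (0 : EuclideanSpace ℝ (Fin 2)) r₁ ∩ closedBall x r₂) := by
  have hS : MeasurableSet {p : EuclideanSpace ℝ (Fin 2) × EuclideanSpace ℝ (Fin 2) |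
      p.2 ∈ closedBall (0 : EuclideanSpace ℝ (Fin 2)) r₁ ∧ dist p.2 p.1 ≤ r₂} := by
    have h1 : IsClosed {p : EuclideanSpace ℝ (Fin 2) × EuclideanSpace ℝ (Fin 2) |
        p.2 ∈ closedBall (0 : EuclideanSpace ℝ (Fin 2)) r₁} :=
      isClosed_closedBall.preimage continuous_snd
    have h2 : IsClosed {p : EuclideanSpace ℝ (Fin 2) × EuclideanSpace ℝ (Fin 2) |
        dist p.2 p.1 ≤ r₂} :=
      isClosed_le (continuous_snd.dist continuous_fst) continuous_const
    exact (h1.inter h2).measurableSet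
  have key := measurable_measure_prodMk_left (ν := volume) hS
  have heq : (fun x : EuclideanSpace ℝ (Fin 2) =>
      volume (closedBall (0 : EuclideanSpace ℝ (Fin 2)) r₁ ∩ closedBall x r₂)) = fun x =>
      volume (Prod.mk x ⁻¹' {p : EuclideanSpace ℝ (Fin 2) × EuclideanSpace ℝ (Fin 2) |
        p.2 ∈ closedBall (0 : EuclideanSpace ℝ (Fin 2)) r₁ ∧ dist p.2 p.1 ≤ r₂}) := by
    funext x
    rfl
  rw [heq]
  exact key

/-- The total integral computation via Fubini. -/
lemma lintegral_inter (r₁ r₂ : ℝ) (h₁ : 0 ≤ r₁) (h₂ : 0 ≤ r₂) :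
    ∫⁻ x : EuclideanSpace ℝ (Fin 2),
        volume (closedBall (0 : EuclideanSpace ℝ (Fin 2)) r₁ ∩ closedBall x r₂)
      = ENNReal.ofReal (π * r₁ ^ 2) * ENNReal.ofReal (π * r₂ ^ 2) := by
  set A := closedBall (0 : EuclideanSpace ℝ (Fin 2)) r₁ with hA
  set S : Set (EuclideanSpace ℝ (Fin 2) × EuclideanSpace ℝ (Fin 2)) :=
    {p | p.2 ∈ A ∧ dist p.2 p.1 ≤ r₂} with hS
  have hSm : MeasurableSet S := by
    have h1 : IsClosed {p : EuclideanSpace ℝ (Fin 2) × EuclideanSpace ℝ (Fin 2) | p.2 ∈ A} :=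
      isClosed_closedBall.preimage continuous_snd
    have h2 : IsClosed {p : EuclideanSpace ℝ (Fin 2) × EuclideanSpace ℝ (Fin 2) |
        dist p.2 p.1 ≤ r₂} :=
      isClosed_le (continuous_snd.dist continuous_fst) continuous_const
    exact (h1.inter h2).measurableSet
  have step1 : ∀ x, Prod.mk x ⁻¹' S = A ∩ closedBall x r₂ := by
    intro x; ext z; simp [hS, mem_closedBall, and_comm]
  have e1 : ∫⁻ x : EuclideanSpace ℝ (Fin 2), volume (A ∩ closedBall x r₂)
      = (volume.prod volume) S := by
    rw [Measure.prod_apply hSm]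
    exact lintegral_congr fun x => by rw [step1 x]
  -- swap
  set S' : Set (EuclideanSpace ℝ (Fin 2) × EuclideanSpace ℝ (Fin 2)) :=
    {p | p.1 ∈ A ∧ dist p.1 p.2 ≤ r₂} with hS'
  have hS'm : MeasurableSet S' := by
    have h1 : IsClosed {p : EuclideanSpace ℝ (Fin 2) × EuclideanSpace ℝ (Fin 2) | p.1 ∈ A} :=
      isClosed_closedBall.preimage continuous_fst
    have h2 : IsClosed {p : EuclideanSpace ℝ (Fin 2) × EuclideanSpace ℝ (Fin 2) |
        dist p.1 p.2 ≤ r₂} :=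
      isClosed_le (continuous_fst.dist continuous_snd) continuous_const
    exact (h1.inter h2).measurableSet
  have hswap : Prod.swap ⁻¹' S' = S := by
    ext p; simp [hS, hS', dist_comm]
  have e2 : (volume.prod volume) S = (volume.prod volume) S' := by
    rw [← hswap]
    exact (Measure.measurePreserving_swap).measure_preimage hS'm.nullMeasurableSet
  have step2 : ∀ y : EuclideanSpace ℝ (Fin 2),
      volume (Prod.mk y ⁻¹' S') = A.indicator (fun _ => ENNReal.ofReal (π * r₂ ^ 2)) y := by
    intro y
    by_cases hy : y ∈ A
    · have : Prod.mk y ⁻¹' S' = closedBall y r₂ := by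
        ext z; simp [hS', mem_closedBall, hy, dist_comm]
      rw [this, Set.indicator_of_mem hy, vol_closedBall_E2 _ _ h₂]
    · have : Prod.mk y ⁻¹' S' = ∅ := by
        ext z; simp [hS', hy]
      rw [this, Set.indicator_of_notMem hy, measure_empty]
  have e3 : (volume.prod volume) S' = ENNReal.ofReal (π * r₁ ^ 2) * ENNReal.ofReal (π * r₂ ^ 2) := by
    rw [Measure.prod_apply hS'm]
    calc ∫⁻ y, volume (Prod.mk y ⁻¹' S')
        = ∫⁻ y, A.indicator (fun _ => ENNReal.ofReal (π * r₂ ^ 2)) y :=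
          lintegral_congr step2
      _ = ENNReal.ofReal (π * r₂ ^ 2) * volume A := by
          rw [lintegral_indicator measurableSet_closedBall, setLIntegral_const]
      _ = ENNReal.ofReal (π * r₁ ^ 2) * ENNReal.ofReal (π * r₂ ^ 2) := by
          rw [hA, vol_closedBall_E2 _ _ h₁, mul_comm]
  rw [e1, e2, e3]

/-- For `ρ ≥ R_p + r_I`, the radial integral
`I(ρ) = 2π ∫₀^ρ t · S_I(t, R_p, r_I)/(π R_p²) dt` equals `π r_I²`. -/
theorem radial_integral_large (r_I R_p : ℝ) (hrI : 0 < r_I) (hRp : 0 < R_p)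
    (ρ : ℝ) (h : R_p + r_I ≤ ρ) :
    2 * π * ∫ t in (0:ℝ)..ρ, t * SI t R_p r_I / (π * R_p ^ 2) = π * r_I ^ 2 := by
  have hρ0 : (0 : ℝ) < ρ := lt_of_lt_of_le (by linarith) h
  -- The integral of SI over the plane, polar version
  have hfin : ∀ x : EuclideanSpace ℝ (Fin 2),
      volume (closedBall (0 : EuclideanSpace ℝ (Fin 2)) R_p ∩ closedBall x r_I) < ⊤ := by
    intro x
    refine lt_of_le_of_lt (measure_mono Set.inter_subset_left) ?_
    rw [vol_closedBall_E2 _ _ hRp.le]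
    exact ENNReal.ofReal_lt_top
  have hplane : ∫ x : EuclideanSpace ℝ (Fin 2), SI (‖x‖) R_p r_I
      = π * R_p ^ 2 * (π * r_I ^ 2) := by
    have hcongr : ∀ x : EuclideanSpace ℝ (Fin 2), SI (‖x‖) R_p r_I
        = (volume (closedBall (0 : EuclideanSpace ℝ (Fin 2)) R_p ∩ closedBall x r_I)).toReal :=
      fun x => (SI_norm x R_p r_I).symm
    rw [integral_congr_ae (Filter.Eventually.of_forall hcongr)]
    rw [integral_toReal (measurable_SInorm R_p r_I).aemeasurable
      (Filter.Eventually.of_forall hfin)]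
    rw [lintegral_inter R_p r_I hRp.le hrI.le,
      ← ENNReal.ofReal_mul (by positivity), ENNReal.toReal_ofReal (by positivity)]
  -- polar coordinates
  have hpolar := integral_fun_norm_addHaar (volume : Measure (EuclideanSpace ℝ (Fin 2)))
    (fun y => SI y R_p r_I)
  rw [hplane] at hpolar
  simp only [finrank_euclideanSpace, Fintype.card_fin, measureReal_def, vol_ball_E2_one, smul_eq_mul,
    nsmul_eq_mul, Nat.cast_ofNat, show (2:ℕ)-1 = 1 from rfl, pow_one] at hpolar
  -- hpolar : π * R_p ^ 2 * (π * r_I ^ 2) = 2 * (π * ∫ y in Set.Ioi 0, y * SI y R_p r_I)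
  -- restrict the integral to (0, ρ]
  have hzero : ∀ y ∈ Set.Ioi ρ, y * SI y R_p r_I = 0 := by
    intro y hy
    rw [SI_zero_of_lt (lt_of_le_of_lt h hy), mul_zero]
  have hmeas : Measurable fun y : ℝ => y * SI y R_p r_I :=
    measurable_id.mul (measurable_SI R_p r_I)
  have hbound : ∀ y ∈ Set.Ioc (0:ℝ) ρ, ‖y * SI y R_p r_I‖ ≤ ρ * (π * r_I ^ 2) := by
    intro y hy
    have h1 : SI y R_p r_I ≤ π * r_I ^ 2 := by
      rw [SI]
      calc (volume (closedBall (0 : EuclideanSpace ℝ (Fin 2)) R_p ∩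
            closedBall (EuclideanSpace.single (0 : Fin 2) y) r_I)).toReal
          ≤ (volume (closedBall (EuclideanSpace.single (0 : Fin 2) y) r_I)).toReal := by
            apply ENNReal.toReal_mono
            · rw [vol_closedBall_E2 _ _ hrI.le]; exact ENNReal.ofReal_ne_top
            · exact measure_mono Set.inter_subset_right
        _ = π * r_I ^ 2 := by
            rw [vol_closedBall_E2 _ _ hrI.le, ENNReal.toReal_ofReal (by positivity)]
    rw [Real.norm_eq_abs, abs_of_nonneg (mul_nonneg (le_of_lt hy.1) (SI_nonneg _ _ _))]
    exact mul_le_mul hy.2 h1 (SI_nonneg _ _ _) hρ0.le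
  have hintOn : IntegrableOn (fun y : ℝ => y * SI y R_p r_I) (Set.Ioc 0 ρ) volume := by
    apply Measure.integrableOn_of_bounded
    · rw [Real.volume_Ioc]; exact ENNReal.ofReal_ne_top
    · exact hmeas.aestronglyMeasurable
    · exact (ae_restrict_iff' measurableSet_Ioc).2 (Filter.Eventually.of_forall hbound)
  have hintOn2 : IntegrableOn (fun y : ℝ => y * SI y R_p r_I) (Set.Ioi ρ) volume := by
    apply (integrableOn_congr_fun hzero measurableSet_Ioi).2
    exact integrableOn_zero
  have hsplit : ∫ y in Set.Ioi (0:ℝ), y * SI y R_p r_I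
      = ∫ y in Set.Ioc (0:ℝ) ρ, y * SI y R_p r_I := by
    have hunion : Set.Ioi (0:ℝ) = Set.Ioc 0 ρ ∪ Set.Ioi ρ := (Set.Ioc_union_Ioi_eq_Ioi hρ0.le).symm
    rw [hunion, setIntegral_union (Set.Ioc_disjoint_Ioi le_rfl) measurableSet_Ioi hintOn hintOn2]
    have : ∫ y in Set.Ioi ρ, y * SI y R_p r_I = 0 := by
      rw [setIntegral_congr_fun measurableSet_Ioi hzero, integral_zero]
    rw [this, add_zero]
  rw [hsplit] at hpolar
  -- Now relate the interval integral to the set integral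
  have hinterval : ∫ t in (0:ℝ)..ρ, t * SI t R_p r_I / (π * R_p ^ 2)
      = (∫ y in Set.Ioc (0:ℝ) ρ, y * SI y R_p r_I) / (π * R_p ^ 2) := by
    rw [intervalIntegral.integral_of_le hρ0.le]
    rw [← integral_div]
  rw [hinterval]
  have hπR : π * R_p ^ 2 ≠ 0 := by positivity
  field_simp
  apply mul_left_cancel₀ pi_ne_zero
  linarith [hpolar]
end

section
/- Assume 0 < R_I < d and d − R_I < r_I + R_p < d + R_I. Then Q = π r_I² − 2 ∫_{d−R_I}^{r_I+R_p} (S_I(r, R_p, r_I)/(π R_p²)) · r · arccos((d² + r² − R_I²)/(2 d r)) dr. -/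
open MeasureTheory Metric Real

namespace QAux

open Set Filter

abbrev E2 := EuclideanSpace ℝ (Fin 2)

lemma vol_cb (x : E2) (r : ℝ) (hr : 0 ≤ r) :
    volume (closedBall x r) = ENNReal.ofReal (π * r ^ 2) := by
  rw [EuclideanSpace.volume_closedBall]
  have h2 : Fintype.card (Fin 2) = 2 := by simp
  rw [h2]
  have : Real.sqrt π ^ 2 / Real.Gamma ((2 : ℕ) / 2 + 1) = π := by
    rw [Real.sq_sqrt Real.pi_pos.le]
    norm_num [Real.Gamma_two]
  rw [this, ← ENNReal.ofReal_pow hr, ← ENNReal.ofReal_mul (by positivity)]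
  ring_nf

lemma SI_norm (R_p r_I : ℝ) (x : E2) :
    SI ‖x‖ R_p r_I = (volume (closedBall x R_p ∩ closedBall 0 r_I)).toReal := by
  have h1 : volume (closedBall x R_p ∩ closedBall (0 : E2) r_I)
      = volume (closedBall (0 : E2) R_p ∩ closedBall (-x) r_I) := by
    have hmp := measurePreserving_add_right (volume : Measure E2) (-x)
    have := hmp.measure_preimage
      ((measurableSet_closedBall.inter measurableSet_closedBall).nullMeasurableSet
        (s := closedBall (0 : E2) R_p ∩ closedBall (-x) r_I))
    rw [← this]
    congr 1
    ext y
    simp only [mem_preimage, mem_inter_iff, mem_closedBall, dist_eq_norm]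
    constructor
    · rintro ⟨h1, h2⟩
      constructor
      · simpa [sub_eq_add_neg] using h1
      · simpa [sub_eq_add_neg] using h2
    · rintro ⟨h1, h2⟩
      constructor
      · simpa [sub_eq_add_neg] using h1
      · simpa [sub_eq_add_neg] using h2
  have hnorm : ‖EuclideanSpace.single (0 : Fin 2) ‖x‖‖ = ‖(-x : E2)‖ := by
    rw [EuclideanSpace.norm_single, norm_neg, norm_norm]
  set v : E2 := EuclideanSpace.single (0 : Fin 2) ‖x‖ with hv
  set f := Submodule.reflection (ℝ ∙ (v - (-x)))ᗮ with hfdef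
  have hfv : f v = -x := Submodule.reflection_sub hnorm
  have hfsymm : f.symm = f := Submodule.reflection_symm
  have hfw : f (-x) = v := by
    have h := congrArg f hfv
    rw [hfdef, Submodule.reflection_reflection, ← hfdef] at h
    exact h.symm
  have h2 : volume (closedBall (0 : E2) R_p ∩ closedBall (-x) r_I)
      = volume (closedBall (0 : E2) R_p ∩ closedBall v r_I) := by
    have hmp := f.measurePreserving (F := E2)
    have := hmp.measure_preimage
      ((measurableSet_closedBall.inter measurableSet_closedBall).nullMeasurableSet
        (s := closedBall (0 : E2) R_p ∩ closedBall (-x) r_I))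
    rw [← this]
    congr 1
    ext y
    have hd : ∀ c : E2, dist (f y) c = dist y (f.symm c) := by
      intro c
      conv_lhs => rw [← f.apply_symm_apply c]
      exact f.dist_map _ _
    simp only [mem_preimage, mem_inter_iff, mem_closedBall]
    rw [hd, hd, hfsymm, hfw, show f (0 : E2) = 0 from f.map_zero]
  rw [SI, ← hv, ← h2, ← h1]


variable {R_p r_I : ℝ}

lemma hsG (R_p r_I : ℝ) : MeasurableSet {q : E2 × E2 | dist q.2 q.1 ≤ R_p ∧ ‖q.2‖ ≤ r_I} := by
  apply IsClosed.measurableSet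
  exact (isClosed_le (continuous_snd.dist continuous_fst) continuous_const).inter
    (isClosed_le continuous_snd.norm continuous_const)

lemma heqG (R_p r_I : ℝ) (x : E2) :
    (Prod.mk x ⁻¹' {q : E2 × E2 | dist q.2 q.1 ≤ R_p ∧ ‖q.2‖ ≤ r_I})
      = closedBall x R_p ∩ closedBall 0 r_I := by
  ext z
  simp [mem_closedBall, dist_comm z x, dist_zero_right]

lemma meas_volG (R_p r_I : ℝ) :
    Measurable (fun x : E2 => volume (closedBall x R_p ∩ closedBall 0 r_I)) := by
  have h := measurable_measure_prodMk_left (ν := (volume : Measure E2)) (hsG R_p r_I)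
  simp_rw [← heqG R_p r_I]
  exact h

lemma meas_G (R_p r_I : ℝ) :
    Measurable (fun x : E2 => (volume (closedBall x R_p ∩ closedBall 0 r_I)).toReal) :=
  (meas_volG R_p r_I).ennreal_toReal

lemma meas_SI (R_p r_I : ℝ) : Measurable (fun r : ℝ => SI r R_p r_I) := by
  have hcont : Continuous (fun r : ℝ => (EuclideanSpace.single (0 : Fin 2) r : E2)) := by
    have h : (fun r : ℝ => (EuclideanSpace.single (0 : Fin 2) r : E2))
        = fun r : ℝ => r • (EuclideanSpace.single (0 : Fin 2) (1:ℝ) : E2) := by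
      funext r
      ext i
      by_cases hi : i = 0 <;> simp [EuclideanSpace.single_apply, hi]
    rw [h]
    exact continuous_id.smul continuous_const
  have hs : MeasurableSet {q : ℝ × E2 | ‖q.2‖ ≤ R_p ∧ dist q.2 (EuclideanSpace.single 0 q.1) ≤ r_I} := by
    apply IsClosed.measurableSet
    exact (isClosed_le continuous_snd.norm continuous_const).inter
      (isClosed_le (continuous_snd.dist (hcont.comp continuous_fst)) continuous_const)
  have h := measurable_measure_prodMk_left (ν := (volume : Measure E2)) hs
  have heq : ∀ r : ℝ, (Prod.mk r ⁻¹' {q : ℝ × E2 | ‖q.2‖ ≤ R_p ∧ dist q.2 (EuclideanSpace.single 0 q.1) ≤ r_I})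
      = closedBall (0:E2) R_p ∩ closedBall (EuclideanSpace.single 0 r) r_I := by
    intro r
    ext z
    simp [mem_closedBall, dist_zero_right]
  have h2 : (fun r : ℝ => SI r R_p r_I)
      = fun r => (volume (Prod.mk r ⁻¹' {q : ℝ × E2 | ‖q.2‖ ≤ R_p ∧ dist q.2 (EuclideanSpace.single 0 q.1) ≤ r_I})).toReal := by
    funext r; rw [SI, heq]
  rw [h2]
  exact h.ennreal_toReal

lemma SI_nonneg (d r₁ r₂ : ℝ) : 0 ≤ SI d r₁ r₂ := ENNReal.toReal_nonneg

lemma SI_le (hrI : 0 ≤ r_I) (d : ℝ) : SI d R_p r_I ≤ π * r_I ^ 2 := by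
  rw [SI]
  have h1 : volume (closedBall (0 : E2) R_p ∩ closedBall (EuclideanSpace.single 0 d) r_I)
      ≤ ENNReal.ofReal (π * r_I ^ 2) := by
    rw [← vol_cb (EuclideanSpace.single 0 d) r_I hrI]
    exact measure_mono inter_subset_right
  calc (volume (closedBall (0 : E2) R_p ∩ closedBall (EuclideanSpace.single 0 d) r_I)).toReal
      ≤ (ENNReal.ofReal (π * r_I ^ 2)).toReal := ENNReal.toReal_mono ENNReal.ofReal_ne_top h1
    _ = π * r_I ^ 2 := ENNReal.toReal_ofReal (by positivity)

lemma integral_G (hRp : 0 ≤ R_p) (hrI : 0 ≤ r_I) :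
    ∫ x : E2, (volume (closedBall x R_p ∩ closedBall 0 r_I)).toReal
      = (π * R_p ^ 2) * (π * r_I ^ 2) := by
  set s : Set (E2 × E2) := {q : E2 × E2 | dist q.2 q.1 ≤ R_p ∧ ‖q.2‖ ≤ r_I} with hsdef
  have hs : MeasurableSet s := hsG R_p r_I
  have hlint : ∫⁻ x : E2, volume (closedBall x R_p ∩ closedBall 0 r_I)
      = ENNReal.ofReal (π * R_p ^ 2) * ENNReal.ofReal (π * r_I ^ 2) := by
    have h1 : ∀ x : E2, volume (closedBall x R_p ∩ closedBall 0 r_I)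
        = ∫⁻ z : E2, s.indicator 1 (x, z) := by
      intro x
      rw [← heqG R_p r_I x,
        ← lintegral_indicator_one (hs.preimage measurable_prodMk_left)]
      rfl
    calc ∫⁻ x : E2, volume (closedBall x R_p ∩ closedBall 0 r_I)
        = ∫⁻ x : E2, ∫⁻ z : E2, s.indicator 1 (x, z) := by simp_rw [h1]
      _ = ∫⁻ z : E2, ∫⁻ x : E2, s.indicator 1 (x, z) := by
          apply lintegral_lintegral_swap
          exact ((measurable_one.indicator hs).comp measurable_id).aemeasurable
      _ = ∫⁻ z : E2, (closedBall (0:E2) r_I).indicator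
            (fun _ => ENNReal.ofReal (π * R_p ^ 2)) z := by
          apply lintegral_congr
          intro z
          by_cases hz : ‖z‖ ≤ r_I
          · have h3 : ∀ x : E2, s.indicator (1 : E2 × E2 → ENNReal) (x, z)
                = (closedBall z R_p).indicator (1 : E2 → ENNReal) x := by
              intro x
              by_cases hx : dist z x ≤ R_p
              · simp [indicator_apply, hsdef, hx, hz, mem_closedBall, dist_comm x z]
              · simp [indicator_apply, hsdef, hx, hz, mem_closedBall, dist_comm x z]
            simp_rw [h3]
            rw [lintegral_indicator_one measurableSet_closedBall, vol_cb z R_p hRp]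
            simp [indicator_apply, mem_closedBall, dist_zero_right, hz]
          · have h3 : ∀ x : E2, s.indicator (1 : E2 × E2 → ENNReal) (x, z) = 0 := by
              intro x; simp [indicator_apply, hsdef, hz]
            simp_rw [h3]
            simp [indicator_apply, mem_closedBall, dist_zero_right, hz]
      _ = ENNReal.ofReal (π * R_p ^ 2) * ENNReal.ofReal (π * r_I ^ 2) := by
          rw [lintegral_indicator_const measurableSet_closedBall, vol_cb _ r_I hrI]
  have hae : ∀ᵐ x : E2, volume (closedBall x R_p ∩ closedBall 0 r_I) < ⊤ := by
    apply Eventually.of_forall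
    intro x
    calc volume (closedBall x R_p ∩ closedBall 0 r_I)
        ≤ volume (closedBall (0:E2) r_I) := measure_mono inter_subset_right
      _ < ⊤ := by rw [vol_cb _ _ hrI]; exact ENNReal.ofReal_lt_top
  rw [integral_toReal (meas_volG R_p r_I).aemeasurable hae, hlint,
    ← ENNReal.ofReal_mul (by positivity)]
  exact ENNReal.toReal_ofReal (by positivity)


/-- measurable equiv from `ℝ × ℝ` to `E2`. -/
noncomputable def mEq : (ℝ × ℝ) ≃ᵐ E2 :=
  (MeasurableEquiv.finTwoArrow).symm.trans (MeasurableEquiv.toLp 2 (Fin 2 → ℝ))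

lemma mEq_mp : MeasurePreserving (mEq) volume volume :=
  ((EuclideanSpace.volume_preserving_symm_measurableEquiv_toLp (Fin 2)).symm).comp
    ((volume_preserving_finTwoArrow ℝ).symm)

lemma mEq_apply (p : ℝ × ℝ) (i : Fin 2) : mEq p i = ![p.1, p.2] i := rfl

lemma mEq_norm (p : ℝ × ℝ) : ‖mEq p‖ = Real.sqrt (p.1 ^ 2 + p.2 ^ 2) := by
  rw [EuclideanSpace.norm_eq]
  congr 1
  rw [Fin.sum_univ_two]
  simp [mEq_apply, sq_abs]

lemma mEq_dist (p : ℝ × ℝ) (c : ℝ) :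
    dist (mEq p) (EuclideanSpace.single (0 : Fin 2) c)
      = Real.sqrt ((p.1 - c) ^ 2 + p.2 ^ 2) := by
  rw [EuclideanSpace.dist_eq]
  congr 1
  rw [Fin.sum_univ_two]
  simp [mEq_apply, EuclideanSpace.single_apply, Real.dist_eq, sq_abs]

lemma arccos_antitone : Antitone arccos := fun _ _ h =>
  sub_le_sub_left (monotone_arcsin h) _

lemma theta_set (u : ℝ) (hu1 : -1 < u) (hu2 : u ≤ 1) :
    {θ : ℝ | θ ∈ Ioo (-π) π ∧ u ≤ cos θ} = Icc (-arccos u) (arccos u) := by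
  have hA1 : arccos u ≤ π := arccos_le_pi u
  have hA2 : arccos u < π := by
    rcases lt_or_eq_of_le hA1 with h | h
    · exact h
    · exact absurd (arccos_eq_pi.mp h) (by linarith)
  ext θ
  simp only [mem_setOf_eq, mem_Ioo, mem_Icc]
  constructor
  · rintro ⟨⟨h1, h2⟩, hc⟩
    have habs : |θ| ≤ π := abs_le.mpr ⟨h1.le, h2.le⟩
    have hc' : u ≤ cos |θ| := by rwa [cos_abs]
    have := arccos_antitone hc'
    rw [arccos_cos (abs_nonneg θ) habs] at this
    exact abs_le.mp this
  · rintro ⟨h1, h2⟩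
    have habs : |θ| ≤ arccos u := abs_le.mpr ⟨h1, h2⟩
    refine ⟨⟨by linarith [abs_le.mp habs, neg_abs_le θ], lt_of_le_of_lt (le_abs_self θ) (lt_of_le_of_lt habs hA2)⟩, ?_⟩
    have : cos (arccos u) ≤ cos |θ| :=
      cos_le_cos_of_nonneg_of_le_pi (abs_nonneg θ) hA1 habs
    rwa [cos_arccos hu1.le hu2, cos_abs] at this
  
lemma setIntegral_subset_of_zero {s t : Set (ℝ × ℝ)} {f : ℝ × ℝ → ℝ}
    (hs : MeasurableSet s) (ht : MeasurableSet t) (hts : t ⊆ s)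
    (h0 : ∀ x ∈ s, x ∉ t → f x = 0) :
    ∫ x in s, f x = ∫ x in t, f x := by
  have h1 : ∫ x in s, f x = ∫ x in s, t.indicator f x := by
    apply setIntegral_congr_fun hs
    intro x hx
    by_cases hxt : x ∈ t
    · simp [indicator_apply, hxt]
    · simp [indicator_apply, hxt, h0 x hx hxt]
  rw [h1, setIntegral_indicator ht, inter_eq_self_of_subset_right hts]

lemma polar_symm_apply (q : ℝ × ℝ) : polarCoord.symm q = (q.1 * cos q.2, q.1 * sin q.2) := rfl

lemma norm_mEq_polar (r θ : ℝ) (hr : 0 ≤ r) : ‖mEq (r * cos θ, r * sin θ)‖ = r := by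
  rw [mEq_norm]
  have h : (r * cos θ) ^ 2 + (r * sin θ) ^ 2 = r ^ 2 := by
    nlinarith [sin_sq_add_cos_sq θ]
  rw [h, Real.sqrt_sq hr]

lemma step4 (r_I R_p R_I d : ℝ) (hrI : 0 < r_I) (hRp : 0 < R_p) (hRI : 0 < R_I)
    (hdR : R_I < d) (h1 : d - R_I < r_I + R_p) (h2 : r_I + R_p < d + R_I) :
    ∫ y in closedBall (0:E2) (r_I + R_p) ∩ closedBall (EuclideanSpace.single 0 d) R_I,
        SI ‖y‖ R_p r_I / (π * R_p ^ 2)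
      = ∫ r in (d - R_I)..(r_I + R_p),
          2 * (SI r R_p r_I / (π * R_p ^ 2) * r *
            arccos ((d ^ 2 + r ^ 2 - R_I ^ 2) / (2 * d * r))) := by
  set R : ℝ := r_I + R_p with hRdef
  have hR : 0 < R := by positivity
  have hdRI : 0 < d - R_I := by linarith
  have hd0 : 0 < d := hRI.trans hdR
  set F : ℝ → ℝ := fun r => SI r R_p r_I / (π * R_p ^ 2) with hFdef
  set u : ℝ → ℝ := fun r => (d ^ 2 + r ^ 2 - R_I ^ 2) / (2 * d * r) with hudef
  set C : ℝ := (π * r_I ^ 2) / (π * R_p ^ 2) with hCdef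
  have hC0 : 0 ≤ C := by positivity
  have hFmeas : Measurable F := (meas_SI R_p r_I).div_const _
  have hF0 : ∀ r, 0 ≤ F r := fun r => div_nonneg (SI_nonneg _ _ _) (by positivity)
  have hFC : ∀ r, F r ≤ C := fun r =>
    div_le_div_of_nonneg_right (SI_le hrI.le r) (by positivity) |>.trans_eq rfl
  set A : Set E2 := closedBall (0:E2) R ∩ closedBall (EuclideanSpace.single 0 d) R_I with hAdef
  have hA : MeasurableSet A := measurableSet_closedBall.inter measurableSet_closedBall
  set T : Set (ℝ × ℝ) := mEq ⁻¹' A with hTdef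
  have hT : MeasurableSet T := hA.preimage mEq.measurable
  -- membership characterization
  have hmem : ∀ r θ : ℝ, 0 < r →
      ((r * cos θ, r * sin θ) ∈ T ↔ (r ≤ R ∧ u r ≤ cos θ)) := by
    intro r θ hr
    rw [hTdef, mem_preimage, hAdef, mem_inter_iff, mem_closedBall, mem_closedBall,
      dist_zero_right, norm_mEq_polar r θ hr.le, mEq_dist]
    have hiff : Real.sqrt ((r * cos θ - d) ^ 2 + (r * sin θ) ^ 2) ≤ R_I
        ↔ u r ≤ cos θ := by
      rw [show R_I = Real.sqrt (R_I ^ 2) by rw [Real.sqrt_sq hRI.le],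
        Real.sqrt_le_sqrt_iff (by positivity), hudef]
      rw [div_le_iff₀ (by nlinarith : (0:ℝ) < 2 * d * r)]
      constructor <;> intro h <;> nlinarith [sin_sq_add_cos_sq θ]
    rw [hiff]
  -- the inner-integral value function
  set g : ℝ → ℝ := fun r => 2 * (F r * r * arccos (u r)) with hgdef
  -- u bounds on [d - R_I, R]
  have hu_bounds : ∀ r : ℝ, 0 < r → d - R_I ≤ r → r ≤ R → -1 < u r ∧ u r ≤ 1 := by
    intro r hr hr1 hr2
    have hden : 0 < 2 * d * r := by nlinarith
    constructor
    · rw [hudef, lt_div_iff₀ hden]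
      nlinarith
    · rw [hudef, div_le_iff₀ hden]
      nlinarith
  -- chain of equalities
  have hpolarf : Continuous (fun q : ℝ × ℝ => (q.1 * cos q.2, q.1 * sin q.2)) :=
    (continuous_fst.mul (continuous_cos.comp continuous_snd)).prodMk
      (continuous_fst.mul (continuous_sin.comp continuous_snd))
  set f : ℝ × ℝ → ℝ := T.indicator (fun p => F ‖mEq p‖) with hfdef
  have hfmeas : Measurable f := by
    apply Measurable.indicator _ hT
    exact hFmeas.comp (mEq.measurable.norm)
  have hfbd : ∀ p, |f p| ≤ C := by
    intro p
    rw [hfdef]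
    by_cases hp : p ∈ T
    · rw [indicator_of_mem hp]
      rw [abs_of_nonneg (hF0 _)]
      exact hFC _
    · rw [indicator_of_notMem hp]
      simpa using hC0
  have step_a : ∫ y in A, F ‖y‖ = ∫ p in T, F ‖mEq p‖ :=
    (mEq_mp.setIntegral_preimage_emb mEq.measurableEmbedding _ _).symm
  have step_b : ∫ p in T, F ‖mEq p‖ = ∫ p, f p := (integral_indicator hT).symm
  have step_c : ∫ p, f p
      = ∫ q in (Ioi (0:ℝ) ×ˢ Ioo (-π) π), q.1 • f (polarCoord.symm q) := by
    rw [← integral_comp_polarCoord_symm f]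
    rfl
  -- restrict to the box
  set B : Set (ℝ × ℝ) := Ioc 0 R ×ˢ Ioo (-π) π with hBdef
  have hBmeas : MeasurableSet B := measurableSet_Ioc.prod measurableSet_Ioo
  have htargmeas : MeasurableSet (Ioi (0:ℝ) ×ˢ Ioo (-π) π) :=
    measurableSet_Ioi.prod measurableSet_Ioo
  have step_d : ∫ q in (Ioi (0:ℝ) ×ˢ Ioo (-π) π), q.1 • f (polarCoord.symm q)
      = ∫ q in B, q.1 • f (polarCoord.symm q) := by
    apply setIntegral_subset_of_zero htargmeas hBmeas
    · intro q hq
      exact ⟨hq.1.1, hq.2⟩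
    · intro q hq hqB
      have hq1 : 0 < q.1 := hq.1
      have hq2 : R < q.1 := by
        by_contra hcon
        exact hqB ⟨⟨hq1, le_of_not_gt hcon⟩, hq.2⟩
      have : f (polarCoord.symm q) = 0 := by
        rw [hfdef, polar_symm_apply, indicator_apply_eq_zero]
        intro hmemT
        exact absurd ((hmem q.1 q.2 hq1).mp hmemT).1 (not_le.mpr hq2)
      rw [this, smul_zero]
  have hvolB : volume B ≠ ⊤ := by
    rw [hBdef, Measure.volume_eq_prod, Measure.prod_prod]
    exact ENNReal.mul_ne_top (by simp [Real.volume_Ioc]) (by simp [Real.volume_Ioo])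
  have hmeasH : Measurable (fun q : ℝ × ℝ => q.1 • f (polarCoord.symm q)) := by
    apply measurable_fst.smul
    exact hfmeas.comp hpolarf.measurable
  have hInt : IntegrableOn (fun q : ℝ × ℝ => q.1 • f (polarCoord.symm q)) B := by
    apply Measure.integrableOn_of_bounded hvolB hmeasH.aestronglyMeasurable (M := R * C)
    rw [ae_restrict_iff' hBmeas]
    apply Eventually.of_forall
    intro q hq
    have hq1 : 0 < q.1 := hq.1.1
    have hq2 : q.1 ≤ R := hq.1.2
    rw [smul_eq_mul, Real.norm_eq_abs, abs_mul]
    apply mul_le_mul _ (hfbd _) (abs_nonneg _) hR.le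
    rw [abs_of_pos hq1]; exact hq2
  have step_e : ∫ q in B, q.1 • f (polarCoord.symm q)
      = ∫ r in Ioc (0:ℝ) R, ∫ θ in Ioo (-π) π, r • f (polarCoord.symm (r, θ)) := by
    have hInt' : IntegrableOn (fun q : ℝ × ℝ => q.1 • f (polarCoord.symm q))
        (Ioc 0 R ×ˢ Ioo (-π) π) (volume.prod volume) := by
      rw [← Measure.volume_eq_prod]; exact hInt
    rw [hBdef, Measure.volume_eq_prod, setIntegral_prod _ hInt']
  have inner_eval : ∀ r ∈ Ioc (0:ℝ) R,
      ∫ θ in Ioo (-π) π, r • f (polarCoord.symm (r, θ))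
        = (Icc (d - R_I) R).indicator g r := by
    intro r hr
    have hr0 : 0 < r := hr.1
    have hrR : r ≤ R := hr.2
    set S : Set ℝ := {θ : ℝ | u r ≤ cos θ} with hSdef
    have hSmeas : MeasurableSet S := (isClosed_le continuous_const continuous_cos).measurableSet
    have hpt : ∀ θ : ℝ, r • f (polarCoord.symm (r, θ)) = S.indicator (fun _ => r * F r) θ := by
      intro θ
      rw [hfdef, polar_symm_apply]
      dsimp only
      by_cases hθ : u r ≤ cos θ
      · have hθS : θ ∈ S := mem_setOf_eq ▸ hθ
        have hmemT : (r * cos θ, r * sin θ) ∈ T := (hmem r θ hr0).mpr ⟨hrR, hθ⟩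
        rw [indicator_of_mem hmemT, indicator_of_mem hθS, norm_mEq_polar r θ hr0.le, smul_eq_mul]
      · have hθS : θ ∉ S := fun hc => hθ hc
        have hmemT : (r * cos θ, r * sin θ) ∉ T := fun hmm => hθ ((hmem r θ hr0).mp hmm).2
        rw [indicator_of_notMem hmemT, indicator_of_notMem hθS, smul_zero]
    simp_rw [hpt]
    rw [setIntegral_indicator hSmeas, setIntegral_const]
    by_cases hcase : d - R_I ≤ r
    · obtain ⟨hu1, hu2⟩ := hu_bounds r hr0 hcase hrR
      have hset : Ioo (-π) π ∩ S = Icc (-arccos (u r)) (arccos (u r)) := by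
        rw [← theta_set (u r) hu1 hu2]
        ext θ
        simp only [hSdef, mem_inter_iff, mem_setOf_eq, mem_Ioo]
      have hrmem : r ∈ Icc (d - R_I) R := mem_Icc.mpr ⟨hcase, hrR⟩
      rw [hset, Real.volume_real_Icc_of_le (by linarith [arccos_nonneg (u r)]), indicator_of_mem hrmem]
      have hgr : g r = 2 * (F r * r * arccos (u r)) := rfl
      rw [hgr, smul_eq_mul]
      ring
    · have hu_gt : 1 < u r := by
        rw [hudef]
        rw [lt_div_iff₀ (by nlinarith : (0:ℝ) < 2 * d * r)]
        nlinarith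
      have hset : Ioo (-π) π ∩ S = ∅ := by
        ext θ
        simp only [hSdef, mem_inter_iff, mem_setOf_eq, mem_empty_iff_false, iff_false, mem_Ioo]
        rintro ⟨-, hθ⟩
        linarith [cos_le_one θ]
      have hrnot : r ∉ Icc (d - R_I) R := fun hmm => hcase (mem_Icc.mp hmm).1
      rw [hset, indicator_of_notMem hrnot, measureReal_empty]
      norm_num
  have step_f : ∫ r in Ioc (0:ℝ) R, ∫ θ in Ioo (-π) π, r • f (polarCoord.symm (r, θ))
      = ∫ r in Ioc (0:ℝ) R, (Icc (d - R_I) R).indicator g r :=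
    setIntegral_congr_fun measurableSet_Ioc inner_eval
  have step_g : ∫ r in Ioc (0:ℝ) R, (Icc (d - R_I) R).indicator g r
      = ∫ r in Icc (d - R_I) R, g r := by
    rw [setIntegral_indicator measurableSet_Icc]
    have hseteq : Ioc (0:ℝ) R ∩ Icc (d - R_I) R = Icc (d - R_I) R := by
      apply inter_eq_self_of_subset_right
      intro x hx
      rcases mem_Icc.mp hx with ⟨ha, hb⟩
      exact mem_Ioc.mpr ⟨by linarith, hb⟩
    rw [hseteq]
  have step_h : ∫ r in Icc (d - R_I) R, g r = ∫ r in (d - R_I)..R, g r := by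
    rw [integral_Icc_eq_integral_Ioc, intervalIntegral.integral_of_le (by linarith)]
  show ∫ y in A, F ‖y‖ = ∫ r in (d - R_I)..R, g r
  rw [step_a, step_b, step_c, step_d, step_e, step_f, step_g, step_h]

lemma step3 (r_I R_p : ℝ) (hrI : 0 < r_I) (hRp : 0 < R_p) :
    ∫ y in closedBall (0:E2) (r_I + R_p), SI ‖y‖ R_p r_I / (π * R_p ^ 2) = π * r_I ^ 2 := by
  have hzero : ∀ y : E2, y ∉ closedBall (0:E2) (r_I + R_p) →
      SI ‖y‖ R_p r_I / (π * R_p ^ 2) = 0 := by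
    intro y hy
    have hnorm : r_I + R_p < ‖y‖ := by
      simpa [mem_closedBall, dist_zero_right, not_le] using hy
    have hempty : closedBall y R_p ∩ closedBall (0:E2) r_I = ∅ := by
      ext z
      simp only [mem_inter_iff, mem_closedBall, dist_zero_right, mem_empty_iff_false, iff_false,
        not_and, not_le]
      intro hz1
      have h3 : ‖y‖ ≤ ‖y - z‖ + ‖z‖ := by
        calc ‖y‖ = ‖(y - z) + z‖ := by rw [sub_add_cancel]
          _ ≤ ‖y - z‖ + ‖z‖ := norm_add_le _ _
      have h4 : ‖y - z‖ = dist z y := by rw [dist_eq_norm, norm_sub_rev]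
      linarith [hz1, dist_comm z y]
    rw [SI_norm, hempty]
    simp
  rw [setIntegral_eq_integral_of_forall_compl_eq_zero hzero]
  have heq : (fun y : E2 => SI ‖y‖ R_p r_I / (π * R_p ^ 2))
      = fun y => (volume (closedBall y R_p ∩ closedBall 0 r_I)).toReal / (π * R_p ^ 2) := by
    funext y; rw [SI_norm]
  rw [heq, integral_div, integral_G hRp.le hrI.le]
  field_simp

lemma integrableOn_F_ball (r_I R_p : ℝ) (hrI : 0 < r_I) (hRp : 0 < R_p) :
    IntegrableOn (fun y : E2 => SI ‖y‖ R_p r_I / (π * R_p ^ 2))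
      (closedBall (0:E2) (r_I + R_p)) volume := by
  refine Measure.integrableOn_of_bounded (M := (π * r_I ^ 2) / (π * R_p ^ 2)) ?_ ?_ ?_
  · rw [vol_cb _ _ (by positivity)]
    exact ENNReal.ofReal_ne_top
  · exact (((meas_SI R_p r_I).comp measurable_norm).div_const _).aestronglyMeasurable
  · apply Eventually.of_forall
    intro y
    rw [Real.norm_eq_abs, abs_of_nonneg (div_nonneg (SI_nonneg _ _ _) (by positivity))]
    exact div_le_div_of_nonneg_right (SI_le hrI.le _) (by positivity) |>.trans_eq rfl

end QAux

/-- Case 2 (middle subcase) of the reduction of the double integral `Q` to a single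
radial integral: `0 < R_I < d` and `d − R_I < r_I + R_p < d + R_I`. -/
theorem Q_single_integral_case2_middle (r_I R_p R_I d : ℝ)
    (hrI : 0 < r_I) (hRp : 0 < R_p) (hRI : 0 < R_I)
    (hdR : R_I < d)
    (h1 : d - R_I < r_I + R_p) (h2 : r_I + R_p < d + R_I)
    (a b : EuclideanSpace ℝ (Fin 2)) (hab : dist a b = d) :
    (∫ x in closedBall a (r_I + R_p) \ closedBall b R_I,
        SI ‖x - a‖ R_p r_I / (π * R_p ^ 2))
      = π * r_I ^ 2
        - 2 * ∫ r in (d - R_I)..(r_I + R_p),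
            (SI r R_p r_I / (π * R_p ^ 2)) * r *
              arccos ((d ^ 2 + r ^ 2 - R_I ^ 2) / (2 * d * r)) := by
  have hd0 : 0 < d := hRI.trans hdR
  set R : ℝ := r_I + R_p with hRdef
  have hR : 0 < R := by positivity
  set F : ℝ → ℝ := fun r => SI r R_p r_I / (π * R_p ^ 2) with hFdef
  set v : QAux.E2 := EuclideanSpace.single (0 : Fin 2) d with hvdef
  have hnorm : ‖v‖ = ‖b - a‖ := by
    rw [hvdef, EuclideanSpace.norm_single, Real.norm_eq_abs, abs_of_nonneg hd0.le, ← hab,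
      dist_comm, dist_eq_norm]
  set f := Submodule.reflection (ℝ ∙ (v - (b - a)))ᗮ with hfdef
  have hfv : f v = b - a := Submodule.reflection_sub hnorm
  set ψ : QAux.E2 ≃ᵐ QAux.E2 :=
    f.toHomeomorph.toMeasurableEquiv.trans (Homeomorph.addLeft a).toMeasurableEquiv with hψdef
  have hψfun : ∀ x, ψ x = a + f x := fun x => rfl
  have hψmp : MeasurePreserving ψ volume volume := by
    have hmp1 := f.measurePreserving (F := QAux.E2)
    have hmp2 := measurePreserving_add_left (volume : Measure QAux.E2) a
    exact hmp2.comp hmp1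
  have hA : MeasurableSet (closedBall a R \ closedBall b R_I) :=
    measurableSet_closedBall.diff measurableSet_closedBall
  have hpre1 : ∀ y : QAux.E2, (ψ y ∈ closedBall a R ↔ y ∈ closedBall (0:QAux.E2) R) := by
    intro y
    rw [hψfun]
    simp [mem_closedBall, dist_eq_norm, add_sub_cancel_left, f.norm_map, sub_zero]
  have hpre2 : ∀ y : QAux.E2, (ψ y ∈ closedBall b R_I ↔ y ∈ closedBall v R_I) := by
    intro y
    rw [hψfun, mem_closedBall, mem_closedBall, dist_eq_norm, dist_eq_norm,
      show a + f y - b = f y - (b - a) from by abel, ← hfv, ← map_sub, f.norm_map]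
  have hFψ : ∀ y : QAux.E2, F ‖ψ y - a‖ = F ‖y‖ := by
    intro y
    rw [hψfun, add_sub_cancel_left, f.norm_map]
  have hpt : ∀ y : QAux.E2,
      Set.indicator (closedBall a R \ closedBall b R_I) (fun x => F ‖x - a‖) (ψ y)
        = Set.indicator (closedBall (0:QAux.E2) R \ closedBall v R_I) (fun z => F ‖z‖) y := by
    intro y
    by_cases hy : y ∈ closedBall (0:QAux.E2) R \ closedBall v R_I
    · have hmem : ψ y ∈ closedBall a R \ closedBall b R_I :=
        ⟨(hpre1 y).mpr hy.1, fun hc => hy.2 ((hpre2 y).mp hc)⟩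
      rw [Set.indicator_of_mem hmem, Set.indicator_of_mem hy]
      exact hFψ y
    · have hmem : ψ y ∉ closedBall a R \ closedBall b R_I := fun hc =>
        hy ⟨(hpre1 y).mp hc.1, fun hb2 => hc.2 ((hpre2 y).mpr hb2)⟩
      rw [Set.indicator_of_notMem hmem, Set.indicator_of_notMem hy]
  calc ∫ x in closedBall a R \ closedBall b R_I, F ‖x - a‖
      = ∫ x, Set.indicator (closedBall a R \ closedBall b R_I) (fun x => F ‖x - a‖) x :=
        (integral_indicator hA).symm
    _ = ∫ y, Set.indicator (closedBall a R \ closedBall b R_I) (fun x => F ‖x - a‖) (ψ y) :=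
        (hψmp.integral_comp' _).symm
    _ = ∫ y, Set.indicator (closedBall (0:QAux.E2) R \ closedBall v R_I) (fun z => F ‖z‖) y := by
        congr 1
        funext y
        exact hpt y
    _ = ∫ y in closedBall (0:QAux.E2) R \ closedBall v R_I, F ‖y‖ :=
        integral_indicator (measurableSet_closedBall.diff measurableSet_closedBall)
    _ = (∫ y in closedBall (0:QAux.E2) R, F ‖y‖)
        - ∫ y in closedBall (0:QAux.E2) R ∩ closedBall v R_I, F ‖y‖ := by
        have hd2 : closedBall (0:QAux.E2) R \ closedBall v R_I
            = closedBall (0:QAux.E2) R \ (closedBall (0:QAux.E2) R ∩ closedBall v R_I) := by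
          ext z
          simp only [Set.mem_diff, Set.mem_inter_iff]
          tauto
        rw [hd2]
        exact integral_diff (measurableSet_closedBall.inter measurableSet_closedBall)
          (QAux.integrableOn_F_ball r_I R_p hrI hRp) Set.inter_subset_left
    _ = π * r_I ^ 2
        - 2 * ∫ r in (d - R_I)..R, F r * r * arccos ((d ^ 2 + r ^ 2 - R_I ^ 2) / (2 * d * r)) := by
        rw [QAux.step3 r_I R_p hrI hRp, hvdef, QAux.step4 r_I R_p R_I d hrI hRp hRI hdR h1 h2,
          ← intervalIntegral.integral_const_mul]
end

section
/- Fix d ≥ 0, R_p, R_I > 0, μ > 0, and points a, b ∈ ℝ² with dist(a, b) = d. For r_I > 0 define F(r_I) = exp(−μ(Q(r_I) + π R_I²)), where Q(r_I) = ∫_{D(a, r_I + R_p) \ D(b, R_I)} S_I(‖x − a‖, R_p, r_I)/(π R_p²) dx. Then F is nonincreasing on (0, ∞); moreover, for all 0 < r_I < r_I′ with d + r_I′ + R_p > R_I, one has F(r_I′) < F(r_I). (This is the paper's Theorem T1.1: the closed-form probability of opportunity Pr[H₀] is a strictly decreasing function of the secondary transmission power p_tx ∝ r_I^α.) -/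
open MeasureTheory Metric Real

/-- The double integral `Q` appearing in the closed-form probability of opportunity. -/
noncomputable def Qfun (a b : EuclideanSpace ℝ (Fin 2)) (R_p R_I r_I : ℝ) : ℝ :=
  ∫ x in closedBall a (r_I + R_p) \ closedBall b R_I, SI ‖x - a‖ R_p r_I / (π * R_p ^ 2)

/-! ### Auxiliary material -/

/-- The area of the intersection of `closedBall a R` and `closedBall x r`. -/
noncomputable def gvol (a : EuclideanSpace ℝ (Fin 2)) (R r : ℝ)
    (x : EuclideanSpace ℝ (Fin 2)) : ℝ :=
  (volume (closedBall a R ∩ closedBall x r)).toReal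

lemma vol_inter_ne_top (a : EuclideanSpace ℝ (Fin 2)) (R r : ℝ)
    (x : EuclideanSpace ℝ (Fin 2)) :
    volume (closedBall a R ∩ closedBall x r) ≠ ⊤ :=
  ((measure_mono Set.inter_subset_left).trans_lt measure_closedBall_lt_top).ne

lemma gvol_nonneg (a : EuclideanSpace ℝ (Fin 2)) (R r : ℝ) (x : EuclideanSpace ℝ (Fin 2)) :
    0 ≤ gvol a R r x := ENNReal.toReal_nonneg

lemma gvol_le (a : EuclideanSpace ℝ (Fin 2)) (R r : ℝ) (x : EuclideanSpace ℝ (Fin 2)) :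
    gvol a R r x ≤ (volume (closedBall a R)).toReal :=
  ENNReal.toReal_mono measure_closedBall_lt_top.ne (measure_mono Set.inter_subset_left)

lemma gvol_mono (a : EuclideanSpace ℝ (Fin 2)) (R : ℝ) {r r' : ℝ} (h : r ≤ r')
    (x : EuclideanSpace ℝ (Fin 2)) : gvol a R r x ≤ gvol a R r' x :=
  ENNReal.toReal_mono (vol_inter_ne_top a R r' x)
    (measure_mono (Set.inter_subset_inter_right _ (closedBall_subset_closedBall h)))

lemma gvol_zero (a : EuclideanSpace ℝ (Fin 2)) (R r : ℝ) {x : EuclideanSpace ℝ (Fin 2)}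
    (h : R + r < dist a x) : gvol a R r x = 0 := by
  have : closedBall a R ∩ closedBall x r = ∅ := by
    ext y
    simp only [Set.mem_inter_iff, mem_closedBall, Set.mem_empty_iff_false, iff_false, not_and]
    intro h1 h2
    have := dist_triangle a y x
    rw [dist_comm a y] at this
    linarith
  simp [gvol, this]

lemma gvol_meas (a : EuclideanSpace ℝ (Fin 2)) (R r : ℝ) : Measurable (gvol a R r) := by
  have hs : MeasurableSet {p : EuclideanSpace ℝ (Fin 2) × EuclideanSpace ℝ (Fin 2) |
      dist p.2 a ≤ R ∧ dist p.2 p.1 ≤ r} := by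
    apply MeasurableSet.inter
    · exact measurableSet_le (continuous_snd.dist continuous_const).measurable measurable_const
    · exact measurableSet_le (continuous_snd.dist continuous_fst).measurable measurable_const
  have hset : ∀ x : EuclideanSpace ℝ (Fin 2),
      Prod.mk x ⁻¹' {p : EuclideanSpace ℝ (Fin 2) × EuclideanSpace ℝ (Fin 2) |
        dist p.2 a ≤ R ∧ dist p.2 p.1 ≤ r} = closedBall a R ∩ closedBall x r := by
    intro x
    ext y
    simp [mem_closedBall]
  have hmeas := measurable_measure_prodMk_left (ν := volume) hs
  simp only [hset] at hmeas
  exact hmeas.ennreal_toReal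

lemma SI_eq_gvol (a x : EuclideanSpace ℝ (Fin 2)) (R r : ℝ) :
    SI ‖x - a‖ R r = gvol a R r x := by
  unfold SI gvol
  congr 1
  set v : EuclideanSpace ℝ (Fin 2) := x - a with hv
  set w : EuclideanSpace ℝ (Fin 2) := EuclideanSpace.single (0 : Fin 2) ‖x - a‖ with hw
  have hnorm : ‖w‖ = ‖v‖ := by
    rw [hw, EuclideanSpace.norm_single, norm_norm]
  set f := Submodule.reflection (ℝ ∙ (w - v))ᗮ with hf
  have hfw : f w = v := Submodule.reflection_sub hnorm
  have hf0 : f 0 = 0 := map_zero f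
  have step1 : volume (closedBall (0 : EuclideanSpace ℝ (Fin 2)) R ∩ closedBall w r)
      = volume (closedBall (0 : EuclideanSpace ℝ (Fin 2)) R ∩ closedBall v r) := by
    have hpre : f ⁻¹' (closedBall (0 : EuclideanSpace ℝ (Fin 2)) R ∩ closedBall v r)
        = closedBall (0 : EuclideanSpace ℝ (Fin 2)) R ∩ closedBall w r := by
      ext y
      simp only [Set.mem_preimage, Set.mem_inter_iff, mem_closedBall]
      rw [← hf0, ← hfw, f.dist_map, f.dist_map, hf0]
    rw [← hpre]
    exact f.measurePreserving.measure_preimage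
      ((measurableSet_closedBall.inter measurableSet_closedBall).nullMeasurableSet)
  have step2 : volume (closedBall (0 : EuclideanSpace ℝ (Fin 2)) R ∩ closedBall v r)
      = volume (closedBall a R ∩ closedBall x r) := by
    have hpre : (fun y => y + a) ⁻¹' (closedBall a R ∩ closedBall x r)
        = closedBall (0 : EuclideanSpace ℝ (Fin 2)) R ∩ closedBall v r := by
      ext y
      simp only [Set.mem_preimage, Set.mem_inter_iff, mem_closedBall, hv, dist_eq_norm]
      constructor
      · rintro ⟨h1, h2⟩
        refine ⟨by simpa using h1, ?_⟩
        have : y - (x - a) = y + a - x := by abel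
        rw [this]; exact h2
      · rintro ⟨h1, h2⟩
        refine ⟨by simpa using h1, ?_⟩
        have : y + a - x = y - (x - a) := by abel
        rw [this]; exact h2
    rw [← hpre]
    exact (measurePreserving_add_right volume a).measure_preimage
      ((measurableSet_closedBall.inter measurableSet_closedBall).nullMeasurableSet)
  rw [step1, step2]

lemma integrableOn_gvol_div (a : EuclideanSpace ℝ (Fin 2)) (R r c : ℝ)
    {s : Set (EuclideanSpace ℝ (Fin 2))} (hs : volume s ≠ ⊤) :
    IntegrableOn (fun x => gvol a R r x / c) s := by
  apply Measure.integrableOn_of_bounded hs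
    (((gvol_meas a R r).div_const c).aestronglyMeasurable)
    (M := (volume (closedBall a R)).toReal * |c⁻¹|)
  filter_upwards with y
  rw [Real.norm_eq_abs, div_eq_mul_inv, abs_mul, abs_of_nonneg (gvol_nonneg a R r y)]
  exact mul_le_mul_of_nonneg_right (gvol_le a R r y) (abs_nonneg _)

lemma Qfun_eq (a b : EuclideanSpace ℝ (Fin 2)) (R_p R_I r : ℝ) :
    Qfun a b R_p R_I r = ∫ x in closedBall a (r + R_p) \ closedBall b R_I,
      gvol a R_p r x / (π * R_p ^ 2) := by
  unfold Qfun
  simp only [SI_eq_gvol]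

lemma Qfun_mono (a b : EuclideanSpace ℝ (Fin 2)) (R_I : ℝ) {R_p : ℝ} (hRp : 0 < R_p)
    {r r' : ℝ} (hrr : r ≤ r') :
    Qfun a b R_p R_I r ≤ Qfun a b R_p R_I r' := by
  have hc : (0:ℝ) < π * R_p ^ 2 := by positivity
  rw [Qfun_eq, Qfun_eq]
  have hfin : volume (closedBall a (r + R_p) \ closedBall b R_I) ≠ ⊤ :=
    ((measure_mono Set.diff_subset).trans_lt measure_closedBall_lt_top).ne
  have hfin' : volume (closedBall a (r' + R_p) \ closedBall b R_I) ≠ ⊤ :=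
    ((measure_mono Set.diff_subset).trans_lt measure_closedBall_lt_top).ne
  have hsub : closedBall a (r + R_p) \ closedBall b R_I
      ⊆ closedBall a (r' + R_p) \ closedBall b R_I :=
    Set.diff_subset_diff_left (closedBall_subset_closedBall (by linarith))
  have h1 : ∫ x in closedBall a (r + R_p) \ closedBall b R_I, gvol a R_p r x / (π * R_p ^ 2)
      ≤ ∫ x in closedBall a (r + R_p) \ closedBall b R_I,
        gvol a R_p r' x / (π * R_p ^ 2) := by
    apply setIntegral_mono (integrableOn_gvol_div a R_p r _ hfin)
      (integrableOn_gvol_div a R_p r' _ hfin)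
    intro y
    exact div_le_div_of_nonneg_right (gvol_mono a R_p hrr y) hc.le
  have h2 : ∫ x in closedBall a (r + R_p) \ closedBall b R_I, gvol a R_p r' x / (π * R_p ^ 2)
      ≤ ∫ x in closedBall a (r' + R_p) \ closedBall b R_I,
        gvol a R_p r' x / (π * R_p ^ 2) := by
    apply setIntegral_mono_set (integrableOn_gvol_div a R_p r' _ hfin')
      (ae_of_all _ fun y => div_nonneg (gvol_nonneg a R_p r' y) hc.le)
      (HasSubset.Subset.eventuallyLE hsub)
  linarith

lemma exists_dir (a b : EuclideanSpace ℝ (Fin 2)) :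
    ∃ u : EuclideanSpace ℝ (Fin 2), ‖u‖ = 1 ∧
      ∀ t : ℝ, 0 ≤ t → dist (a + t • u) b = dist a b + t := by
  rcases eq_or_ne a b with h | h
  · subst h
    refine ⟨EuclideanSpace.single (0 : Fin 2) (1:ℝ), by simp, ?_⟩
    intro t ht
    rw [dist_eq_norm, add_sub_cancel_left, norm_smul, dist_self]
    simp [abs_of_nonneg ht]
  · have hab0 : (0:ℝ) < ‖a - b‖ := by
      rw [norm_pos_iff]; exact sub_ne_zero.2 h
    refine ⟨‖a - b‖⁻¹ • (a - b), ?_, ?_⟩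
    · rw [norm_smul, norm_inv, norm_norm, inv_mul_cancel₀ hab0.ne']
    · intro t ht
      have hinv : (0:ℝ) ≤ t * ‖a - b‖⁻¹ := mul_nonneg ht (inv_nonneg.2 hab0.le)
      have key : a + t • (‖a - b‖⁻¹ • (a - b)) - b = (1 + t * ‖a - b‖⁻¹) • (a - b) := by
        rw [smul_smul, add_smul, one_smul, add_sub_right_comm]
      rw [dist_eq_norm, key, norm_smul, Real.norm_eq_abs,
        abs_of_nonneg (by linarith), dist_eq_norm]
      field_simp

set_option maxHeartbeats 2000000 in
lemma Qfun_strict (a b : EuclideanSpace ℝ (Fin 2)) {d R_p R_I : ℝ} (hRp : 0 < R_p)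
    (hab : dist a b = d) {r r' : ℝ} (hr : 0 < r) (hrr : r < r')
    (hRI : R_I < d + r' + R_p) :
    Qfun a b R_p R_I r < Qfun a b R_p R_I r' := by
  have hc : (0:ℝ) < π * R_p ^ 2 := by positivity
  obtain ⟨u, hu, hdist⟩ := exists_dir a b
  rw [hab] at hdist
  obtain ⟨t, ht1, ht2⟩ := exists_between (show max (r + R_p) (R_I - d) < r' + R_p by
    rw [max_lt_iff]; constructor <;> linarith)
  have htr : r + R_p < t := lt_of_le_of_lt (le_max_left _ _) ht1
  have htRI : R_I - d < t := lt_of_le_of_lt (le_max_right _ _) ht1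
  have ht0 : 0 < t := by linarith
  set x : EuclideanSpace ℝ (Fin 2) := a + t • u with hx
  have hxa : dist x a = t := by
    rw [hx, dist_eq_norm, add_sub_cancel_left, norm_smul, hu, Real.norm_eq_abs,
      abs_of_nonneg ht0.le, mul_one]
  have hxb : dist x b = d + t := hdist t ht0.le
  set s : ℝ := t * R_p / (R_p + r') with hsdef
  have hRr' : (0:ℝ) < R_p + r' := by linarith
  have hs0 : 0 < s := by positivity
  have hsRp : s < R_p := by
    rw [hsdef, div_lt_iff₀ hRr']
    nlinarith
  have hst : s ≤ t := by
    rw [hsdef, div_le_iff₀ hRr']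
    nlinarith
  have hts : t - s < r' := by
    have hkey : (t - s) * (R_p + r') = t * r' := by
      rw [hsdef]; field_simp
      ring
    nlinarith
  set ε₁ : ℝ := R_p - s with hε₁
  set ε₂ : ℝ := r' - (t - s) with hε₂
  have hε₁0 : 0 < ε₁ := by simp [hε₁]; linarith
  have hε₂0 : 0 < ε₂ := by simp [hε₂]; linarith
  set δ : ℝ := min (ε₂ / 2) (min ((t - (r + R_p)) / 2) ((d + t - R_I) / 2)) with hδ
  have hδ0 : 0 < δ := by
    apply lt_min (by linarith)
    apply lt_min (by linarith) (by linarith)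
  have hδε₂ : δ ≤ ε₂ / 2 := min_le_left _ _
  have hδtr : δ ≤ (t - (r + R_p)) / 2 := (min_le_right _ _).trans (min_le_left _ _)
  have hδRI : δ ≤ (d + t - R_I) / 2 := (min_le_right _ _).trans (min_le_right _ _)
  set ρ : ℝ := min ε₁ (ε₂ / 2) with hρ
  have hρ0 : 0 < ρ := lt_min hε₁0 (by linarith)
  have hρε₁ : ρ ≤ ε₁ := min_le_left _ _
  have hρε₂ : ρ ≤ ε₂ / 2 := min_le_right _ _
  set q : EuclideanSpace ℝ (Fin 2) := a + s • u with hq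
  have hqa : dist q a = s := by
    rw [hq, dist_eq_norm, add_sub_cancel_left, norm_smul, hu, Real.norm_eq_abs,
      abs_of_nonneg hs0.le, mul_one]
  have hqx : dist q x = t - s := by
    rw [hq, hx, dist_eq_norm]
    have : a + s • u - (a + t • u) = (s - t) • u := by
      rw [sub_smul]; abel
    rw [this, norm_smul, hu, Real.norm_eq_abs, abs_of_nonpos (by linarith), mul_one]
    ring
  obtain ⟨V, hVpos⟩ : ∃ V : ℝ, 0 < V ∧ V = (volume (closedBall q ρ)).toReal :=
    ⟨_, ENNReal.toReal_pos (measure_closedBall_pos volume q hρ0).ne'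
      measure_closedBall_lt_top.ne, rfl⟩
  obtain ⟨hVpos, hVeq⟩ := hVpos
  -- pointwise facts on the small ball around x
  have key : ∀ y ∈ closedBall x δ, V ≤ gvol a R_p r' y := by
    intro y hy
    rw [mem_closedBall] at hy
    have hsub : closedBall q ρ ⊆ closedBall a R_p ∩ closedBall y r' := by
      intro z hz
      rw [mem_closedBall] at hz
      constructor
      · rw [mem_closedBall]
        calc dist z a ≤ dist z q + dist q a := dist_triangle _ _ _
          _ ≤ ρ + s := by linarith [hqa]
          _ ≤ ε₁ + s := by linarith
          _ = R_p := by simp [hε₁]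
      · rw [mem_closedBall]
        calc dist z y ≤ dist z q + dist q x + dist x y := dist_triangle4 _ _ _ _
          _ ≤ ρ + (t - s) + δ := by
              have := dist_comm x y ▸ hy
              linarith [hqx]
          _ ≤ ε₂ / 2 + (t - s) + ε₂ / 2 := by linarith
          _ = r' := by simp [hε₂]; ring
    rw [hVeq]
    exact ENNReal.toReal_mono (vol_inter_ne_top a R_p r' y) (measure_mono hsub)
  have hzero : ∀ y ∈ closedBall x δ, gvol a R_p r y = 0 := by
    intro y hy
    rw [mem_closedBall] at hy
    apply gvol_zero
    have h1 : dist a x ≤ dist a y + dist y x := dist_triangle _ _ _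
    rw [dist_comm a x, hxa] at h1
    linarith
  -- the small ball lies inside the larger integration region
  have hUsub : closedBall x δ ⊆ closedBall a (r' + R_p) \ closedBall b R_I := by
    intro y hy
    rw [mem_closedBall] at hy
    constructor
    · rw [mem_closedBall]
      calc dist y a ≤ dist y x + dist x a := dist_triangle _ _ _
        _ ≤ δ + t := by linarith [hxa]
        _ ≤ ε₂ / 2 + t := by linarith
        _ ≤ r' + R_p := by simp [hε₂]; nlinarith
    · intro hyB
      rw [mem_closedBall] at hyB
      have h1 : dist x b ≤ dist x y + dist y b := dist_triangle _ _ _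
      rw [hxb, dist_comm x y] at h1
      linarith
  -- now compare the integrals
  rw [Qfun_eq, Qfun_eq]
  set S : Set (EuclideanSpace ℝ (Fin 2)) := closedBall a (r + R_p) \ closedBall b R_I with hS
  set S' : Set (EuclideanSpace ℝ (Fin 2)) := closedBall a (r' + R_p) \ closedBall b R_I with hS'
  have hSfin : volume S ≠ ⊤ :=
    ((measure_mono Set.diff_subset).trans_lt measure_closedBall_lt_top).ne
  have hS'fin : volume S' ≠ ⊤ :=
    ((measure_mono Set.diff_subset).trans_lt measure_closedBall_lt_top).ne
  have hSS' : S ⊆ S' :=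
    Set.diff_subset_diff_left (closedBall_subset_closedBall (by linarith))
  have hUfin : volume (closedBall x δ) ≠ ⊤ := measure_closedBall_lt_top.ne
  have intr : IntegrableOn (fun y => gvol a R_p r y / (π * R_p ^ 2)) S' :=
    integrableOn_gvol_div a R_p r _ hS'fin
  have intr' : IntegrableOn (fun y => gvol a R_p r' y / (π * R_p ^ 2)) S' :=
    integrableOn_gvol_div a R_p r' _ hS'fin
  have step1 : ∫ y in S, gvol a R_p r y / (π * R_p ^ 2)
      ≤ ∫ y in S', gvol a R_p r y / (π * R_p ^ 2) :=
    setIntegral_mono_set intr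
      (ae_of_all _ fun y => div_nonneg (gvol_nonneg a R_p r y) hc.le)
      (HasSubset.Subset.eventuallyLE hSS')
  have hsubint : ∫ y in S', (gvol a R_p r' y / (π * R_p ^ 2) - gvol a R_p r y / (π * R_p ^ 2))
      = (∫ y in S', gvol a R_p r' y / (π * R_p ^ 2))
        - ∫ y in S', gvol a R_p r y / (π * R_p ^ 2) := integral_sub intr' intr
  have hdiff_nonneg : ∀ y : EuclideanSpace ℝ (Fin 2),
      0 ≤ gvol a R_p r' y / (π * R_p ^ 2) - gvol a R_p r y / (π * R_p ^ 2) := by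
    intro y
    have := gvol_mono a R_p hrr.le y
    have h2 : gvol a R_p r y / (π * R_p ^ 2) ≤ gvol a R_p r' y / (π * R_p ^ 2) :=
      div_le_div_of_nonneg_right this hc.le
    linarith
  have intdiffS' : IntegrableOn
      (fun y => gvol a R_p r' y / (π * R_p ^ 2) - gvol a R_p r y / (π * R_p ^ 2)) S' :=
    intr'.sub intr
  have step2 : ∫ y in closedBall x δ,
      (gvol a R_p r' y / (π * R_p ^ 2) - gvol a R_p r y / (π * R_p ^ 2))
      ≤ ∫ y in S', (gvol a R_p r' y / (π * R_p ^ 2) - gvol a R_p r y / (π * R_p ^ 2)) :=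
    setIntegral_mono_set intdiffS' (ae_of_all _ hdiff_nonneg)
      (HasSubset.Subset.eventuallyLE hUsub)
  have step3 : V / (π * R_p ^ 2) * (volume (closedBall x δ)).toReal
      ≤ ∫ y in closedBall x δ,
        (gvol a R_p r' y / (π * R_p ^ 2) - gvol a R_p r y / (π * R_p ^ 2)) := by
    rw [mul_comm]
    change volume.real (closedBall x δ) • (V / (π * R_p ^ 2)) ≤ _
    apply setIntegral_ge_of_const_le measurableSet_closedBall hUfin
    · intro y hy
      rw [hzero y hy]
      have := key y hy
      have h2 : V / (π * R_p ^ 2) ≤ gvol a R_p r' y / (π * R_p ^ 2) :=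
        div_le_div_of_nonneg_right this hc.le
      rw [zero_div, sub_zero]
      exact h2
    · exact (integrableOn_gvol_div a R_p r' _ hUfin).sub
        (integrableOn_gvol_div a R_p r _ hUfin)
  have hvolU : 0 < (volume (closedBall x δ)).toReal :=
    ENNReal.toReal_pos (measure_closedBall_pos volume x hδ0).ne' hUfin
  have hpos : 0 < V / (π * R_p ^ 2) * (volume (closedBall x δ)).toReal :=
    mul_pos (div_pos hVpos hc) hvolU
  linarith [step1, step2, step3, hpos, hsubint.le, hsubint.symm.le]

/-! ### Main theorem -/

set_option maxHeartbeats 1000000 in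
/-- T1.1: the closed-form probability of opportunity
`F(r_I) = exp(−μ(Q(r_I) + π R_I²))` is nonincreasing in `r_I` on `(0, ∞)`,
and strictly decreasing once `d + r_I′ + R_p > R_I`. -/
theorem probOpp_strict_anti (d R_p R_I μ : ℝ)
    (hd : 0 ≤ d) (hRp : 0 < R_p) (hRI : 0 < R_I) (hμ : 0 < μ)
    (a b : EuclideanSpace ℝ (Fin 2)) (hab : dist a b = d) :
    AntitoneOn (fun r_I => Real.exp (-μ * (Qfun a b R_p R_I r_I + π * R_I ^ 2)))
      (Set.Ioi (0:ℝ)) ∧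
    ∀ r_I r_I' : ℝ, 0 < r_I → r_I < r_I' → R_I < d + r_I' + R_p →
      Real.exp (-μ * (Qfun a b R_p R_I r_I' + π * R_I ^ 2)) <
        Real.exp (-μ * (Qfun a b R_p R_I r_I + π * R_I ^ 2)) := by
  constructor
  · intro r hr r' hr' hle
    simp only
    apply Real.exp_le_exp.mpr
    have hQ := Qfun_mono a b R_I hRp hle
    nlinarith
  · intro r r' hr hlt hRIlt
    apply Real.exp_lt_exp.mpr
    have hQ := Qfun_strict a b hRp hab hr hlt hRIlt
    nlinarith
end

section
/- Fix d ≥ 0, R_p, R_I > 0, and points a, b ∈ ℝ² with dist(a, b) = d. For r_I > 0 let Q(r_I) = ∫_{D(a, r_I + R_p) \ D(b, R_I)} S_I(‖x − a‖, R_p, r_I)/(π R_p²) dx. Then π(r_I² − R_I²) ≤ Q(r_I) ≤ π r_I², and the second inequality is strict whenever d < r_I + R_p + R_I. Consequently, for every μ > 0 the closed-form probability of opportunity F(r_I) = exp(−μ(Q(r_I) + π R_I²)) satisfies exp(−μ π (r_I² + R_I²)) ≤ F(r_I) ≤ exp(−μ π r_I²), with strict left inequality whenever d < r_I + R_p + R_I;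 i.e., F decreases exponentially in μ with decay constant Q(r_I) + π R_I² lying between π r_I² and π(r_I² + R_I²). -/
open MeasureTheory Metric Real

namespace ProbOppAux

local notation "E2" => EuclideanSpace ℝ (Fin 2)

lemma volume_cb (c : E2) (r : ℝ) (hr : 0 ≤ r) :
    volume (closedBall c r) = ENNReal.ofReal (π * r ^ 2) := by
  rw [EuclideanSpace.volume_closedBall]
  simp only [Fintype.card_fin]
  have h2 : ((2 : ℕ) / 2 + 1 : ℝ) = 2 := by norm_num
  rw [h2, Real.Gamma_two]
  rw [Real.sq_sqrt pi_nonneg, ← ENNReal.ofReal_pow hr, ← ENNReal.ofReal_mul (by positivity)]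
  ring_nf

lemma volume_cb_toReal (c : E2) (r : ℝ) (hr : 0 ≤ r) :
    (volume (closedBall c r)).toReal = π * r ^ 2 := by
  rw [volume_cb c r hr, ENNReal.toReal_ofReal (by positivity)]

lemma li_preimage_cb (L : E2 ≃ₗᵢ[ℝ] E2) (c : E2) (r : ℝ) :
    ⇑L ⁻¹' closedBall c r = closedBall (L.symm c) r := by
  ext z
  simp only [Set.mem_preimage, mem_closedBall]
  have h' : dist (L z) c = dist z (L.symm c) := by
    rw [← L.symm.isometry.dist_eq (L z) c, L.symm_apply_apply]
  rw [h']

lemma add_preimage_cb (x c : E2) (r : ℝ) :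
    (· + x) ⁻¹' closedBall c r = closedBall (c - x) r := by
  ext z
  simp only [Set.mem_preimage, mem_closedBall, dist_eq_norm]
  constructor <;> intro h <;> [skip; skip] <;>
    · have : z + x - c = z - (c - x) := by abel
      simp_all [this]

lemma SI_eq (x a : E2) (r₁ r₂ : ℝ) :
    SI ‖x - a‖ r₁ r₂ = (volume (closedBall x r₁ ∩ closedBall a r₂)).toReal := by
  set d : ℝ := ‖x - a‖ with hdd
  set u : E2 := EuclideanSpace.single (0 : Fin 2) d with hu
  set v : E2 := a - x with hv
  have hnorm : ‖u‖ = ‖v‖ := by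
    rw [hu, hv, EuclideanSpace.norm_single, norm_sub_rev]
    simp [hdd, abs_of_nonneg (norm_nonneg _)]
  set L : E2 ≃ₗᵢ[ℝ] E2 := (Submodule.reflection (ℝ ∙ (u - v))ᗮ) with hL
  have hLu : L u = v := Submodule.reflection_sub hnorm
  have hLsv : L.symm v = u := by rw [← hLu]; exact L.symm_apply_apply u
  have h1 : volume (closedBall x r₁ ∩ closedBall a r₂)
      = volume (closedBall (0 : E2) r₁ ∩ closedBall v r₂) := by
    have hmp := measurePreserving_add_right (volume : Measure E2) x
    have := hmp.measure_preimage
      ((measurableSet_closedBall.inter measurableSet_closedBall).nullMeasurableSet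
        (s := closedBall x r₁ ∩ closedBall a r₂))
    rw [← this, Set.preimage_inter, add_preimage_cb, add_preimage_cb, sub_self]
  have h2 : volume (closedBall (0 : E2) r₁ ∩ closedBall v r₂)
      = volume (closedBall (0 : E2) r₁ ∩ closedBall u r₂) := by
    have hmp := L.measurePreserving
    have := hmp.measure_preimage
      ((measurableSet_closedBall.inter measurableSet_closedBall).nullMeasurableSet
        (s := closedBall (0 : E2) r₁ ∩ closedBall v r₂))
    rw [← this, Set.preimage_inter, li_preimage_cb, li_preimage_cb, hLsv, map_zero]
  rw [SI, h1, h2]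

noncomputable def Ffun (a : E2) (R_p r_I : ℝ) (x : E2) : ENNReal :=
  volume (closedBall x R_p ∩ closedBall a r_I)

variable (a : E2) (R_p r_I : ℝ)

lemma T_meas : MeasurableSet {p : E2 × E2 | dist p.2 p.1 ≤ R_p ∧ dist p.2 a ≤ r_I} := by
  apply MeasurableSet.inter
  · exact (isClosed_le (Continuous.dist continuous_snd continuous_fst)
      continuous_const).measurableSet
  · exact (isClosed_le (Continuous.dist continuous_snd continuous_const)
      continuous_const).measurableSet

lemma F_eq_slice (x : E2) :
    Ffun a R_p r_I x
      = volume (Prod.mk x ⁻¹' {p : E2 × E2 | dist p.2 p.1 ≤ R_p ∧ dist p.2 a ≤ r_I}) := by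
  unfold Ffun
  congr 1

lemma F_measurable : Measurable (Ffun a R_p r_I) := by
  have h := measurable_measure_prodMk_left (ν := (volume : Measure E2)) (T_meas a R_p r_I)
  have : (fun x => volume (Prod.mk x ⁻¹' {p : E2 × E2 | dist p.2 p.1 ≤ R_p ∧ dist p.2 a ≤ r_I}))
      = Ffun a R_p r_I := by
    funext x; exact (F_eq_slice a R_p r_I x).symm
  rwa [this] at h

lemma F_lintegral :
    ∫⁻ x, Ffun a R_p r_I x = volume (closedBall a r_I) * volume (closedBall (0 : E2) R_p) := by
  have hT := T_meas a R_p r_I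
  have h1 : ∫⁻ x, Ffun a R_p r_I x
      = (volume.prod volume) {p : E2 × E2 | dist p.2 p.1 ≤ R_p ∧ dist p.2 a ≤ r_I} := by
    rw [Measure.prod_apply hT]
    exact lintegral_congr fun x => F_eq_slice a R_p r_I x
  rw [h1, Measure.prod_apply_symm hT]
  have h2 : ∀ y : E2, volume ((fun x => (x, y)) ⁻¹' {p : E2 × E2 | dist p.2 p.1 ≤ R_p ∧ dist p.2 a ≤ r_I})
      = Set.indicator (closedBall a r_I) (fun _ => volume (closedBall (0 : E2) R_p)) y := by
    intro y
    by_cases h : dist y a ≤ r_I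
    · have hset : ((fun x => (x, y)) ⁻¹' {p : E2 × E2 | dist p.2 p.1 ≤ R_p ∧ dist p.2 a ≤ r_I})
          = closedBall y R_p := by
        ext x
        simp only [Set.mem_preimage, Set.mem_setOf_eq, mem_closedBall, h, and_true]
        rw [dist_comm]
      rw [hset, Set.indicator_of_mem (mem_closedBall.mpr h)]
      exact Measure.addHaar_closedBall_center volume y R_p
    · have hset : ((fun x => (x, y)) ⁻¹' {p : E2 × E2 | dist p.2 p.1 ≤ R_p ∧ dist p.2 a ≤ r_I})
          = ∅ := by
        ext x
        simp only [Set.mem_preimage, Set.mem_setOf_eq, Set.mem_empty_iff_false, iff_false,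
          not_and]
        exact fun _ => h
      rw [hset, Set.indicator_of_notMem (fun hc => h (mem_closedBall.mp hc))]
      simp
  rw [lintegral_congr h2, lintegral_indicator measurableSet_closedBall]
  simp [mul_comm]

lemma F_le (x : E2) : Ffun a R_p r_I x ≤ volume (closedBall (0 : E2) R_p) := by
  refine le_trans (measure_mono Set.inter_subset_left) ?_
  exact le_of_eq (Measure.addHaar_closedBall_center volume x R_p)

lemma F_zero {x : E2} (h : r_I + R_p < dist x a) : Ffun a R_p r_I x = 0 := by
  have : closedBall x R_p ∩ closedBall a r_I = ∅ := by
    rw [Set.eq_empty_iff_forall_notMem]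
    rintro y ⟨hy1, hy2⟩
    rw [mem_closedBall] at hy1 hy2
    have := dist_triangle x y a
    rw [dist_comm x y] at this
    linarith
  rw [Ffun, this, measure_empty]

lemma F_pos {x : E2} (hRp : 0 < R_p) (hrI : 0 < r_I) (h : dist x a < R_p + r_I) :
    0 < Ffun a R_p r_I x := by
  set t : ℝ := r_I / (R_p + r_I) with ht
  have hsum : 0 < R_p + r_I := by linarith
  have ht0 : 0 < t := by positivity
  have ht1 : t < 1 := by rw [ht, div_lt_one hsum]; linarith
  have htv : t * (R_p + r_I) = r_I := by rw [ht, div_mul_cancel₀ _ hsum.ne']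
  set z : E2 := a + t • (x - a) with hz
  set m : ℝ := dist x a with hm
  have hm0 : 0 ≤ m := dist_nonneg
  have hza : dist z a = t * m := by
    rw [hz, dist_eq_norm, add_sub_cancel_left, norm_smul, Real.norm_eq_abs,
      abs_of_pos ht0, hm, dist_eq_norm]
  have hzx : dist z x = (1 - t) * m := by
    have : z - x = -((1 - t) • (x - a)) := by
      rw [hz]; module
    rw [dist_eq_norm, this, norm_neg, norm_smul, Real.norm_eq_abs,
      abs_of_pos (by linarith), hm, dist_eq_norm]
  have hza' : dist z a < r_I := by
    rw [hza]; nlinarith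
  have hzx' : dist z x < R_p := by
    rw [hzx]; nlinarith
  set ε : ℝ := min (R_p - dist z x) (r_I - dist z a) with hε
  have hεpos : 0 < ε := lt_min (by linarith) (by linarith)
  have hsub : ball z ε ⊆ closedBall x R_p ∩ closedBall a r_I := by
    intro y hy
    rw [mem_ball] at hy
    constructor
    · rw [mem_closedBall]
      have := dist_triangle y z x
      have h1 : ε ≤ R_p - dist z x := min_le_left _ _
      linarith
    · rw [mem_closedBall]
      have := dist_triangle y z a
      have h2 : ε ≤ r_I - dist z a := min_le_right _ _
      linarith
  exact lt_of_lt_of_le (measure_ball_pos volume z hεpos) (measure_mono hsub)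

end ProbOppAux

open ProbOppAux in
/-- T1.2/T1.3: `π(r_I² − R_I²) ≤ Q ≤ π r_I²` (the latter strictly when
`d < r_I + R_p + R_I`), hence the closed-form probability of opportunity
`F = exp(−μ(Q + π R_I²))` satisfies
`exp(−μπ(r_I² + R_I²)) ≤ F ≤ exp(−μπ r_I²)` with strict left inequality
whenever `d < r_I + R_p + R_I`. -/
theorem probOpp_exponential_bounds (d R_p R_I : ℝ)
    (hd : 0 ≤ d) (hRp : 0 < R_p) (hRI : 0 < R_I)
    (a b : EuclideanSpace ℝ (Fin 2)) (hab : dist a b = d)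
    (r_I : ℝ) (hrI : 0 < r_I) :
    (π * (r_I ^ 2 - R_I ^ 2) ≤ Qfun a b R_p R_I r_I ∧
      Qfun a b R_p R_I r_I ≤ π * r_I ^ 2) ∧
    (d < r_I + R_p + R_I → Qfun a b R_p R_I r_I < π * r_I ^ 2) ∧
    ∀ μ : ℝ, 0 < μ →
      Real.exp (-(μ * (π * (r_I ^ 2 + R_I ^ 2)))) ≤
          Real.exp (-μ * (Qfun a b R_p R_I r_I + π * R_I ^ 2)) ∧
      Real.exp (-μ * (Qfun a b R_p R_I r_I + π * R_I ^ 2)) ≤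
          Real.exp (-(μ * (π * r_I ^ 2))) ∧
      (d < r_I + R_p + R_I →
        Real.exp (-(μ * (π * (r_I ^ 2 + R_I ^ 2)))) <
          Real.exp (-μ * (Qfun a b R_p R_I r_I + π * R_I ^ 2))) := by
  classical
  set A := closedBall a (r_I + R_p) with hA
  set B := closedBall b R_I with hB
  set C := π * R_p ^ 2 with hC
  have hCpos : 0 < C := by positivity
  set F := Ffun a R_p r_I with hF
  set g : EuclideanSpace ℝ (Fin 2) → ℝ := fun x => (F x).toReal with hg
  have hVp : volume (closedBall (0 : EuclideanSpace ℝ (Fin 2)) R_p) = ENNReal.ofReal C :=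
    volume_cb _ _ hRp.le
  have hVpfin : volume (closedBall (0 : EuclideanSpace ℝ (Fin 2)) R_p) ≠ ⊤ := by
    rw [hVp]; exact ENNReal.ofReal_ne_top
  have hFle : ∀ x, F x ≤ volume (closedBall (0 : EuclideanSpace ℝ (Fin 2)) R_p) :=
    fun x => F_le a R_p r_I x
  have hFfin : ∀ x, F x < ⊤ := fun x => lt_of_le_of_lt (hFle x) (lt_top_iff_ne_top.mpr hVpfin)
  have hFm : Measurable F := F_measurable a R_p r_I
  have htot : ∫⁻ x, F x = volume (closedBall a r_I) *
      volume (closedBall (0 : EuclideanSpace ℝ (Fin 2)) R_p) := F_lintegral a R_p r_I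
  have htotfin : ∫⁻ x, F x ≠ ⊤ := by
    rw [htot]
    exact ENNReal.mul_ne_top (measure_closedBall_lt_top).ne hVpfin
  have hgInt : Integrable g := integrable_toReal_of_lintegral_ne_top hFm.aemeasurable htotfin
  have hgnn : ∀ x, 0 ≤ g x := fun x => ENNReal.toReal_nonneg
  -- Qfun in terms of g
  have hSIg : ∀ x, SI ‖x - a‖ R_p r_I = g x := fun x => SI_eq x a R_p r_I
  have hQ : Qfun a b R_p R_I r_I = (∫ x in A \ B, g x) / C := by
    rw [Qfun, ← integral_div]
    exact setIntegral_congr_fun ((measurableSet_closedBall).diff measurableSet_closedBall)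
      (fun x _ => by rw [hSIg x])
  -- integral over A equals total
  have hFA : ∫⁻ x in A, F x = ∫⁻ x, F x := by
    have hind : F = A.indicator F := by
      funext x
      by_cases h : x ∈ A
      · rw [Set.indicator_of_mem h]
      · rw [Set.indicator_of_notMem h]
        have : r_I + R_p < dist x a := by
          by_contra hc
          exact h (mem_closedBall.mpr (le_of_not_gt hc))
        exact F_zero a R_p r_I this
    conv_rhs => rw [hind]
    rw [lintegral_indicator measurableSet_closedBall]
  have hIA : ∫ x in A, g x = (π * r_I ^ 2) * C := by
    have h1 : ∫ x in A, g x = (∫⁻ x in A, F x).toReal := by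
      rw [hg]
      exact integral_toReal (hFm.aemeasurable.restrict)
        (Filter.Eventually.of_forall fun x => hFfin x)
    rw [h1, hFA, htot, hVp, volume_cb a r_I hrI.le, ← ENNReal.ofReal_mul (by positivity),
      ENNReal.toReal_ofReal (by positivity)]
  -- the subtracted part
  set I : ℝ := ∫ x in A ∩ B, g x with hIdef
  have hI0 : 0 ≤ I := setIntegral_nonneg (measurableSet_closedBall.inter measurableSet_closedBall)
    (fun x _ => hgnn x)
  have hIle : I ≤ (π * R_I ^ 2) * C := by
    have h1 : I = (∫⁻ x in A ∩ B, F x).toReal := by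
      rw [hIdef, hg]
      exact integral_toReal (hFm.aemeasurable.restrict)
        (Filter.Eventually.of_forall fun x => hFfin x)
    have h2 : ∫⁻ x in A ∩ B, F x ≤ ENNReal.ofReal ((π * R_I ^ 2) * C) := by
      calc ∫⁻ x in A ∩ B, F x
          ≤ ∫⁻ _ in A ∩ B, volume (closedBall (0 : EuclideanSpace ℝ (Fin 2)) R_p) :=
            lintegral_mono fun x => hFle x
        _ = volume (closedBall (0 : EuclideanSpace ℝ (Fin 2)) R_p) * volume (A ∩ B) := by
            rw [setLIntegral_const]
        _ ≤ volume (closedBall (0 : EuclideanSpace ℝ (Fin 2)) R_p) * volume B :=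
            mul_le_mul_right (measure_mono Set.inter_subset_right) _
        _ = ENNReal.ofReal ((π * R_I ^ 2) * C) := by
            rw [hVp, hB, volume_cb b R_I hRI.le, ← ENNReal.ofReal_mul (by positivity)]
            ring_nf
    rw [h1]
    calc (∫⁻ x in A ∩ B, F x).toReal ≤ (ENNReal.ofReal ((π * R_I ^ 2) * C)).toReal :=
          ENNReal.toReal_mono ENNReal.ofReal_ne_top h2
      _ = (π * R_I ^ 2) * C := ENNReal.toReal_ofReal (by positivity)
  -- splitting
  have hsplit : ∫ x in A, g x = (∫ x in A \ B, g x) + I := by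
    have hAd : (A \ B) ∪ (A ∩ B) = A := Set.diff_union_inter A B
    have hdisj : Disjoint (A \ B) (A ∩ B) :=
      Set.disjoint_left.mpr fun x hx hx2 => hx.2 hx2.2
    have h := setIntegral_union hdisj
      (measurableSet_closedBall.inter measurableSet_closedBall)
      (hgInt.integrableOn (s := A \ B)) (hgInt.integrableOn (s := A ∩ B))
    rw [hAd] at h
    exact h
  have hQval : Qfun a b R_p R_I r_I = π * r_I ^ 2 - I / C := by
    rw [hQ]
    have : ∫ x in A \ B, g x = (π * r_I ^ 2) * C - I := by linarith [hsplit, hIA]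
    rw [this]
    field_simp
  have hJ0 : 0 ≤ I / C := div_nonneg hI0 hCpos.le
  have hJle : I / C ≤ π * R_I ^ 2 := (div_le_iff₀ hCpos).mpr hIle
  have hQub : Qfun a b R_p R_I r_I ≤ π * r_I ^ 2 := by rw [hQval]; linarith
  have hQlb : π * (r_I ^ 2 - R_I ^ 2) ≤ Qfun a b R_p R_I r_I := by
    rw [hQval]; nlinarith
  -- strictness
  have hstrict : d < r_I + R_p + R_I → Qfun a b R_p R_I r_I < π * r_I ^ 2 := by
    intro hdlt
    have hIpos : 0 < I := by
      rw [hIdef]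
      refine (setIntegral_pos_iff_support_of_nonneg_ae
        (Filter.Eventually.of_forall fun x => hgnn x) hgInt.integrableOn).mpr ?_
      set U := ball a (r_I + R_p) ∩ ball b R_I with hU
      have hUsub : U ⊆ Function.support g ∩ (A ∩ B) := by
        rintro x ⟨hx1, hx2⟩
        rw [mem_ball] at hx1 hx2
        refine ⟨?_, ball_subset_closedBall (mem_ball.mpr hx1),
          ball_subset_closedBall (mem_ball.mpr hx2)⟩
        have hFpos : 0 < F x := F_pos a R_p r_I hRp hrI (by linarith)
        have : 0 < g x := ENNReal.toReal_pos hFpos.ne' (hFfin x).ne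
        exact Function.mem_support.mpr this.ne'
      have hUopen : IsOpen U := isOpen_ball.inter isOpen_ball
      have hUne : U.Nonempty := by
        set s : ℝ := r_I + R_p + R_I with hs
        have hspos : 0 < s := by linarith
        set t₀ : ℝ := (r_I + R_p) / s with ht₀
        have ht₀pos : 0 < t₀ := by positivity
        have ht₀lt : t₀ < 1 := by rw [ht₀, div_lt_one hspos]; linarith
        have ht₀v : t₀ * s = r_I + R_p := by rw [ht₀, div_mul_cancel₀ _ hspos.ne']
        have ht₀v' : (1 - t₀) * s = R_I := by rw [sub_mul, one_mul, ht₀v, hs]; ring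
        refine ⟨a + t₀ • (b - a), ?_, ?_⟩
        · rw [mem_ball, dist_eq_norm, add_sub_cancel_left, norm_smul, Real.norm_eq_abs,
            abs_of_pos ht₀pos]
          have : ‖b - a‖ = d := by rw [← hab, dist_eq_norm, norm_sub_rev]
          rw [this]
          have h' := mul_lt_mul_of_pos_left hdlt ht₀pos
          rw [ht₀v] at h'
          exact h'
        · rw [mem_ball, dist_eq_norm]
          have heq : a + t₀ • (b - a) - b = -((1 - t₀) • (b - a)) := by module
          rw [heq, norm_neg, norm_smul, Real.norm_eq_abs, abs_of_pos (by linarith)]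
          have : ‖b - a‖ = d := by rw [← hab, dist_eq_norm, norm_sub_rev]
          rw [this]
          have h' := mul_lt_mul_of_pos_left hdlt (by linarith : (0:ℝ) < 1 - t₀)
          rw [ht₀v'] at h'
          exact h'
      exact lt_of_lt_of_le (hUopen.measure_pos volume hUne) (measure_mono hUsub)
    rw [hQval]
    have : 0 < I / C := div_pos hIpos hCpos
    linarith
  refine ⟨⟨hQlb, hQub⟩, hstrict, ?_⟩
  intro μ hμ
  refine ⟨?_, ?_, ?_⟩
  · rw [neg_mul]
    apply Real.exp_le_exp.mpr
    apply neg_le_neg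
    apply mul_le_mul_of_nonneg_left _ hμ.le
    nlinarith
  · rw [neg_mul]
    apply Real.exp_le_exp.mpr
    apply neg_le_neg
    apply mul_le_mul_of_nonneg_left _ hμ.le
    nlinarith
  · intro hdlt
    have := hstrict hdlt
    rw [neg_mul]
    apply Real.exp_lt_exp.mpr
    apply neg_lt_neg
    apply mul_lt_mul_of_pos_left _ hμ
    nlinarith
end

section
/- Fix d ≥ 0, R_p, R_I > 0, and points a, b ∈ ℝ² with dist(a, b) = d. If r_I ≥ d + R_I + R_p, then Q(r_I) = ∫_{D(a, r_I + R_p) \ D(b, R_I)} S_I(‖x − a‖, R_p, r_I)/(π R_p²) dx = π(r_I² − R_I²), and hence for every μ > 0 the closed-form probability of opportunity satisfies F(r_I) = exp(−μ(Q(r_I) + π R_I²)) = exp(−μ π r_I²). -/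
open MeasureTheory Metric Real

lemma volume_closedBall_E2 (c : EuclideanSpace ℝ (Fin 2)) {r : ℝ} (hr : 0 ≤ r) :
    volume (closedBall c r) = ENNReal.ofReal (π * r ^ 2) := by
  rw [EuclideanSpace.volume_closedBall, Fintype.card_fin]
  have h1 : Real.Gamma ((2 : ℕ) / 2 + 1) = 1 := by
    have := Real.Gamma_nat_eq_factorial 1
    norm_num at this ⊢
  rw [h1]
  rw [Real.sq_sqrt pi_nonneg]
  rw [← ENNReal.ofReal_pow hr, ← ENNReal.ofReal_mul (by positivity)]
  ring_nf

lemma vol_inter_congr (x y p q : EuclideanSpace ℝ (Fin 2)) (hxy : dist x y = dist p q)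
    (r s : ℝ) :
    volume (closedBall x r ∩ closedBall y s) = volume (closedBall p r ∩ closedBall q s) := by
  have hnorm : ‖y - x‖ = ‖q - p‖ := by
    rw [← dist_eq_norm, ← dist_eq_norm, dist_comm y x, dist_comm q p, hxy]
  set f := Submodule.reflection (ℝ ∙ ((y - x) - (q - p)))ᗮ with hfdef
  have hfv : f (y - x) = q - p := Submodule.reflection_sub hnorm
  set φ : EuclideanSpace ℝ (Fin 2) → EuclideanSpace ℝ (Fin 2) := fun z => f (z - x) + p with hφ
  have m1 : MeasurePreserving (fun z : EuclideanSpace ℝ (Fin 2) => z - x) volume volume :=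
    measurePreserving_sub_right volume x
  have m2 : MeasurePreserving (f : EuclideanSpace ℝ (Fin 2) → EuclideanSpace ℝ (Fin 2))
      volume volume := f.measurePreserving
  have m3 : MeasurePreserving (fun z : EuclideanSpace ℝ (Fin 2) => z + p) volume volume :=
    measurePreserving_add_right volume p
  have mφ : MeasurePreserving φ volume volume := (m3.comp m2).comp m1
  have hpre : φ ⁻¹' (closedBall p r ∩ closedBall q s) = closedBall x r ∩ closedBall y s := by
    ext z
    have h1 : dist (φ z) p = dist z x := by
      simp only [hφ, dist_eq_norm, add_sub_cancel_right, f.norm_map]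
    have h2 : dist (φ z) q = dist z y := by
      have : φ z - q = f (z - y) := by
        rw [show z - y = (z - x) - (y - x) by abel, map_sub, hfv, hφ]
        abel_nf
        exact add_assoc _ _ _
      rw [dist_eq_norm, this, f.norm_map, ← dist_eq_norm]
    simp [Set.mem_preimage, mem_closedBall, h1, h2]
  rw [← hpre, mφ.measure_preimage
    ((measurableSet_closedBall.inter measurableSet_closedBall).nullMeasurableSet)]

lemma SI_eq (x a : EuclideanSpace ℝ (Fin 2)) (r s : ℝ) :
    SI ‖x - a‖ r s = (volume (closedBall x r ∩ closedBall a s)).toReal := by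
  unfold SI
  congr 1
  apply vol_inter_congr
  rw [dist_eq_norm, zero_sub, norm_neg, EuclideanSpace.norm_single, dist_eq_norm]
  simp [abs_of_nonneg (norm_nonneg _)]

lemma Qfun_eq_s12 (d R_p R_I : ℝ)
    (hd : 0 ≤ d) (hRp : 0 < R_p) (hRI : 0 < R_I)
    (a b : EuclideanSpace ℝ (Fin 2)) (hab : dist a b = d)
    (r_I : ℝ) (h : d + R_I + R_p ≤ r_I) :
    Qfun a b R_p R_I r_I = π * (r_I ^ 2 - R_I ^ 2) := by
  have hrI : 0 < r_I := lt_of_lt_of_le (by positivity) h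
  have hRIle : R_I ≤ r_I := by linarith
  have hsq : R_I ^ 2 ≤ r_I ^ 2 := pow_le_pow_left₀ hRI.le hRIle 2
  have hnn : (0:ℝ) ≤ π * r_I ^ 2 - π * R_I ^ 2 := by
    nlinarith [mul_nonneg pi_nonneg (sub_nonneg.mpr hsq)]
  -- the measurable "overlap area" function
  set S : Set (EuclideanSpace ℝ (Fin 2) × EuclideanSpace ℝ (Fin 2)) :=
    {p | dist p.2 p.1 ≤ R_p ∧ dist p.2 a ≤ r_I} with hSdef
  have hSmeas : MeasurableSet S := by
    have h1 : IsClosed {p : EuclideanSpace ℝ (Fin 2) × EuclideanSpace ℝ (Fin 2) |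
        dist p.2 p.1 ≤ R_p} := isClosed_le (by fun_prop) continuous_const
    have h2 : IsClosed {p : EuclideanSpace ℝ (Fin 2) × EuclideanSpace ℝ (Fin 2) |
        dist p.2 a ≤ r_I} := isClosed_le (by fun_prop) continuous_const
    exact (h1.inter h2).measurableSet
  set g : EuclideanSpace ℝ (Fin 2) → ENNReal := fun x => volume (Prod.mk x ⁻¹' S) with hgdef
  have hgmeas : Measurable g := measurable_measure_prodMk_left hSmeas
  have hsec : ∀ x, Prod.mk x ⁻¹' S = closedBall x R_p ∩ closedBall a r_I := by
    intro x; ext y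
    simp only [Set.mem_preimage, hSdef, Set.mem_setOf_eq, Set.mem_inter_iff, mem_closedBall]
  have hgle : ∀ x, g x ≤ ENNReal.ofReal (π * R_p ^ 2) := by
    intro x
    rw [hgdef]
    simp only
    rw [hsec x, ← volume_closedBall_E2 x hRp.le]
    exact measure_mono Set.inter_subset_left
  -- total integral via Fubini
  have htotal : ∫⁻ x, g x = ENNReal.ofReal (π * R_p ^ 2) * ENNReal.ofReal (π * r_I ^ 2) := by
    have h1 : ∫⁻ x, g x = (volume.prod volume) S := (Measure.prod_apply hSmeas).symm
    rw [h1, Measure.prod_apply_symm hSmeas]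
    have h2 : ∀ y : EuclideanSpace ℝ (Fin 2), volume ((fun x => (x, y)) ⁻¹' S)
        = (closedBall a r_I).indicator (fun _ => ENNReal.ofReal (π * R_p ^ 2)) y := by
      intro y
      by_cases hy : y ∈ closedBall a r_I
      · have hset : (fun x => (x, y)) ⁻¹' S = closedBall y R_p := by
          ext x
          simp only [Set.mem_preimage, hSdef, Set.mem_setOf_eq, mem_closedBall]
          constructor
          · rintro ⟨h1, _⟩; rwa [dist_comm]
          · intro h1
            exact ⟨by rwa [dist_comm], mem_closedBall.mp hy⟩
        rw [hset, Set.indicator_of_mem hy, volume_closedBall_E2 _ hRp.le]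
      · have hset : (fun x => (x, y)) ⁻¹' S = ∅ := by
          ext x
          simp only [Set.mem_preimage, hSdef, Set.mem_setOf_eq, Set.mem_empty_iff_false,
            iff_false, not_and]
          intro _
          exact fun hc => hy (mem_closedBall.mpr hc)
        rw [hset, Set.indicator_of_notMem hy, measure_empty]
    simp_rw [h2]
    rw [lintegral_indicator measurableSet_closedBall, setLIntegral_const,
      volume_closedBall_E2 _ hrI.le]
  -- behaviour of g on the subregions
  have hBsubA : closedBall b R_I ⊆ closedBall a (r_I + R_p) := by
    intro x hx
    rw [mem_closedBall] at hx ⊢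
    have ht := dist_triangle x b a
    rw [dist_comm b a, hab] at ht
    linarith
  have hgB : ∀ x ∈ closedBall b R_I, g x = ENNReal.ofReal (π * R_p ^ 2) := by
    intro x hx
    rw [mem_closedBall] at hx
    have hsub : closedBall x R_p ⊆ closedBall a r_I := by
      intro y hy
      rw [mem_closedBall] at hy ⊢
      have t1 := dist_triangle y x a
      have t2 := dist_triangle x b a
      rw [dist_comm b a, hab] at t2
      linarith
    rw [hgdef]
    simp only
    rw [hsec x, Set.inter_eq_self_of_subset_left hsub, volume_closedBall_E2 _ hRp.le]
  have hgAc : ∀ x ∉ closedBall a (r_I + R_p), g x = 0 := by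
    intro x hx
    rw [hgdef]
    simp only
    rw [hsec x]
    convert measure_empty
    · ext y
      simp only [Set.mem_inter_iff, mem_closedBall, Set.mem_empty_iff_false, iff_false, not_and]
      intro h1 h2
      apply hx
      rw [mem_closedBall]
      have t1 := dist_triangle x y a
      rw [dist_comm x y] at t1
      linarith
    · infer_instance
  -- integrals over the subregions
  have hint_A : ∫⁻ x in closedBall a (r_I + R_p), g x
      = ENNReal.ofReal (π * R_p ^ 2) * ENNReal.ofReal (π * r_I ^ 2) := by
    have hcompl : ∫⁻ x in (closedBall a (r_I + R_p))ᶜ, g x = 0 := by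
      rw [setLIntegral_congr_fun measurableSet_closedBall.compl
        (fun x hx => hgAc x hx)]
      simp
    have hac := lintegral_add_compl g (measurableSet_closedBall
      (x := a) (ε := r_I + R_p)) (μ := volume)
    rw [hcompl, add_zero] at hac
    rw [hac, htotal]
  have hint_B : ∫⁻ x in closedBall b R_I, g x
      = ENNReal.ofReal (π * R_p ^ 2) * ENNReal.ofReal (π * R_I ^ 2) := by
    rw [setLIntegral_congr_fun measurableSet_closedBall
      hgB, setLIntegral_const, volume_closedBall_E2 _ hRI.le]
  have hsplit : (∫⁻ x in closedBall b R_I, g x)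
      + ∫⁻ x in closedBall a (r_I + R_p) \ closedBall b R_I, g x
      = ∫⁻ x in closedBall a (r_I + R_p), g x := by
    rw [← lintegral_union (measurableSet_closedBall.diff measurableSet_closedBall)
      Set.disjoint_sdiff_right, Set.union_diff_cancel hBsubA]
  have hE : ∫⁻ x in closedBall a (r_I + R_p) \ closedBall b R_I, g x
      = ENNReal.ofReal (π * R_p ^ 2 * (π * r_I ^ 2 - π * R_I ^ 2)) := by
    have key : ENNReal.ofReal (π * R_p ^ 2) * ENNReal.ofReal (π * R_I ^ 2)
        + (∫⁻ x in closedBall a (r_I + R_p) \ closedBall b R_I, g x)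
        = ENNReal.ofReal (π * R_p ^ 2) * ENNReal.ofReal (π * r_I ^ 2) := by
      rw [← hint_B, hsplit, hint_A]
    have goal_eq : ENNReal.ofReal (π * R_p ^ 2) * ENNReal.ofReal (π * R_I ^ 2)
        + ENNReal.ofReal (π * R_p ^ 2 * (π * r_I ^ 2 - π * R_I ^ 2))
        = ENNReal.ofReal (π * R_p ^ 2) * ENNReal.ofReal (π * r_I ^ 2) := by
      rw [ENNReal.ofReal_mul (by positivity : (0:ℝ) ≤ π * R_p ^ 2), ← mul_add,
        ← ENNReal.ofReal_add (by positivity) hnn]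
      congr 2
      ring
    exact (ENNReal.add_right_inj
      (ENNReal.mul_ne_top ENNReal.ofReal_ne_top ENNReal.ofReal_ne_top)).mp
      (key.trans goal_eq.symm)
  -- assemble
  unfold Qfun
  have hrw : ∀ x : EuclideanSpace ℝ (Fin 2),
      SI ‖x - a‖ R_p r_I / (π * R_p ^ 2) = (g x).toReal / (π * R_p ^ 2) := by
    intro x
    have hx : g x = volume (closedBall x R_p ∩ closedBall a r_I) := by
      rw [hgdef]
      simp only
      rw [hsec x]
    rw [SI_eq, hx]
  simp_rw [hrw]
  rw [integral_div]
  rw [integral_toReal (hgmeas.aemeasurable.restrict)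
    (Filter.Eventually.of_forall fun x => lt_of_le_of_lt (hgle x) ENNReal.ofReal_lt_top)]
  rw [hE, ENNReal.toReal_ofReal (mul_nonneg (by positivity) hnn)]
  rw [div_eq_iff (by positivity : π * R_p ^ 2 ≠ 0)]
  ring

/-- Equality case of T1.2: if `r_I ≥ d + R_I + R_p` then `Q(r_I) = π(r_I² − R_I²)`
and hence `F(r_I) = exp(−μπ r_I²)` for every `μ > 0`. -/
theorem probOpp_high_power (d R_p R_I : ℝ)
    (hd : 0 ≤ d) (hRp : 0 < R_p) (hRI : 0 < R_I)
    (a b : EuclideanSpace ℝ (Fin 2)) (hab : dist a b = d)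
    (r_I : ℝ) (h : d + R_I + R_p ≤ r_I) :
    Qfun a b R_p R_I r_I = π * (r_I ^ 2 - R_I ^ 2) ∧
    ∀ μ : ℝ, 0 < μ →
      Real.exp (-μ * (Qfun a b R_p R_I r_I + π * R_I ^ 2)) =
        Real.exp (-(μ * (π * r_I ^ 2))) := by
  have hQ := Qfun_eq_s12 d R_p R_I hd hRp hRI a b hab r_I h
  refine ⟨hQ, fun μ _ => ?_⟩
  rw [hQ]
  congr 1
  ring
end
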